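/- arXiv:0705.3448 — 9 statements merged into one kernel-verified Lean document; each statement's English description precedes it below -/
import Mathlib

section
/- In the hyperbolic plane, let X, Y be points on the same side of a line m with feet of perpendiculars to m, and let Z be a point on segment XY. If for the perpendicular distances d1 = d(X,m), d2 = d(Z,m), d3 = d(Y,m) and the distances c1 = d(X,Z), c2 = d(Y,Z) along a line meeting m at angle θ at distance a0 from X one has sinh(d1) = sin(θ)·sinh(a0), sinh(d2) = sin(θ)·sinh(a0 + c1), sinh(d3) = sin(θ)·sinh(a0 + c1 + c2), and x·sinh(c1) = y·sinh(c2), then (x·cosh(c1) + y·cosh(c2))·sinh(d2) = x·sinh(d1) + y·sinh(d3). -/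
open Real

/-- Theorem 3.4 (intersecting case): additivity of moments with respect to a line `m`
meeting the line of the two point-masses at angle `θ`, where
`sinh(dist to m) = sin θ · sinh(distance along the transversal)`. -/
theorem moment_additivity_intersecting (x y θ a0 c1 c2 d1 d2 d3 : ℝ)
    (hx : 0 < x) (hy : 0 < y)
    (h1 : Real.sinh d1 = Real.sin θ * Real.sinh a0)
    (h2 : Real.sinh d2 = Real.sin θ * Real.sinh (a0 + c1))
    (h3 : Real.sinh d3 = Real.sin θ * Real.sinh (a0 + c1 + c2))
    (hbal : x * Real.sinh c1 = y * Real.sinh c2) :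
    (x * Real.cosh c1 + y * Real.cosh c2) * Real.sinh d2
      = x * Real.sinh d1 + y * Real.sinh d3 := by
  have e1 : Real.sinh a0
      = Real.sinh (a0 + c1) * Real.cosh c1 - Real.cosh (a0 + c1) * Real.sinh c1 := by
    rw [← Real.sinh_sub]; ring_nf
  have e3 : Real.sinh (a0 + c1 + c2)
      = Real.sinh (a0 + c1) * Real.cosh c2 + Real.cosh (a0 + c1) * Real.sinh c2 := by
    rw [← Real.sinh_add]
  rw [h1, h2, h3, e1, e3]
  linear_combination Real.sin θ * Real.cosh (a0 + c1) * hbal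
end

section
/- For x, y > 0 and real numbers a0, a1, a2 with x·sinh(a1) = y·sinh(a2), one has (x·cosh(a1) + y·cosh(a2))·cosh(a0 + a1) = x·cosh(a0) + y·cosh(a0 + a1 + a2). -/
open Real

/-- Theorem 3.4 (ultraparallel case): the `cosh` identity giving additivity of moments
with respect to a line admitting a common perpendicular with the line of the masses. -/
theorem moment_additivity_ultraparallel (x y a0 a1 a2 : ℝ) (hx : 0 < x) (hy : 0 < y)
    (hbal : x * Real.sinh a1 = y * Real.sinh a2) :
    (x * Real.cosh a1 + y * Real.cosh a2) * Real.cosh (a0 + a1)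
      = x * Real.cosh a0 + y * Real.cosh (a0 + a1 + a2) := by
  simp only [Real.cosh_add, Real.sinh_add]
  linear_combination (Real.sinh a1 * Real.cosh a0 + Real.sinh a0 * Real.cosh a1) * hbal
    + x * Real.cosh a0 * (Real.cosh_sq a1)
end

section
/- For x, y > 0 and real numbers a0, a1, a2 with x·sinh(a1) = y·sinh(a2), one has (x·cosh(a1) + y·cosh(a2))·sinh(a0 + a1) = x·sinh(a0) + y·sinh(a0 + a1 + a2). -/
open Real

/-- Theorem 3.4 (intersecting case, reduced form): the `sinh` identity giving
additivity of moments when the line meets the line through the two point-masses. -/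
theorem moment_additivity_sinh (x y a0 a1 a2 : ℝ) (hx : 0 < x) (hy : 0 < y)
    (hbal : x * Real.sinh a1 = y * Real.sinh a2) :
    (x * Real.cosh a1 + y * Real.cosh a2) * Real.sinh (a0 + a1)
      = x * Real.sinh a0 + y * Real.sinh (a0 + a1 + a2) := by
  have h1 := Real.cosh_sq_sub_sinh_sq a1
  simp only [Real.sinh_add, Real.cosh_add] at *
  linear_combination (Real.cosh a0 * Real.cosh a1 + Real.sinh a0 * Real.sinh a1) * hbal + x * Real.sinh a0 * h1
end

section
/- In the upper half-plane model of the hyperbolic plane, the binary operation * on point-masses defined by (X,x)*(Y,y) = (Z,z), where Z is the point on segment XY with x·sinh(d(X,Z)) = y·sinh(d(Y,Z)) and z = x·cosh(d(X,Z)) + y·cosh(d(Y,Z)), is commutative and associative. -/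
open Real UpperHalfPlane

noncomputable section

/-- `Z` lies on the geodesic segment from `X` to `Y` (hyperbolic betweenness). -/
def HBtw (X Z Y : ℍ) : Prop := dist X Z + dist Z Y = dist X Y

/-- `(Z, z)` is the hyperbolic centroid of the point-masses `(X, x)` and `(Y, y)`:
`Z` lies between `X` and `Y`, the moments about `Z` balance, and
`z = x·cosh d(X,Z) + y·cosh d(Y,Z)`. -/
def IsCentroid (X : ℍ) (x : ℝ) (Y : ℍ) (y : ℝ) (Z : ℍ) (z : ℝ) : Prop :=
  HBtw X Z Y ∧ x * Real.sinh (dist X Z) = y * Real.sinh (dist Y Z) ∧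
    z = x * Real.cosh (dist X Z) + y * Real.cosh (dist Y Z)

/-- Hyperboloid-model coordinates of a point of the upper half-plane. -/
def g0 (w : ℍ) : ℝ := (w.re ^ 2 + w.im ^ 2 + 1) / (2 * w.im)
def g1 (w : ℍ) : ℝ := w.re / w.im
def g2 (w : ℍ) : ℝ := (w.re ^ 2 + w.im ^ 2 - 1) / (2 * w.im)

lemma pair_eq (z w : ℍ) :
    g0 z * g0 w - g1 z * g1 w - g2 z * g2 w = Real.cosh (dist z w) := by
  rw [UpperHalfPlane.cosh_dist]
  have hz := z.im_pos
  have hw := w.im_pos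
  have hd : dist (z : ℂ) (w : ℂ) ^ 2 = (z.re - w.re) ^ 2 + (z.im - w.im) ^ 2 := by
    rw [Complex.dist_eq, Complex.sq_norm]
    simp [Complex.normSq_apply, Complex.sub_re, Complex.sub_im]
    ring
  rw [hd]
  unfold g0 g1 g2
  field_simp
  ring

lemma g02 (w : ℍ) : g0 w - g2 w = 1 / w.im := by
  have hw : w.im ≠ 0 := ne_of_gt w.im_pos
  unfold g0 g2
  rw [div_sub_div_same,
    show w.re ^ 2 + w.im ^ 2 + 1 - (w.re ^ 2 + w.im ^ 2 - 1) = 2 from by ring]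
  rw [div_eq_div_iff (by positivity) hw]
  ring

lemma sq_inj' {a b : ℝ} (ha : 0 < a) (hb : 0 < b) (h : a ^ 2 = b ^ 2) : a = b := by
  nlinarith [sq_nonneg (a - b)]

lemma perp_null (v0 v1 v2 u0 u1 u2 : ℝ) (hv : v0 ^ 2 - v1 ^ 2 - v2 ^ 2 = 1)
    (h1 : u0 * v0 - u1 * v1 - u2 * v2 = 0) (h2 : u0 ^ 2 - u1 ^ 2 - u2 ^ 2 = 0) :
    u0 = 0 ∧ u1 = 0 ∧ u2 = 0 := by
  have h1' : u0 * v0 = u1 * v1 + u2 * v2 := by linarith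
  have hsq : (u0 * v0) ^ 2 = (u1 * v1 + u2 * v2) ^ 2 := by rw [h1']
  have h12 : u1 ^ 2 + u2 ^ 2 = 0 := by
    nlinarith [sq_nonneg (u1 * v2 - u2 * v1), sq_nonneg u0, sq_nonneg u1, sq_nonneg u2]
  have hu1 : u1 = 0 := by nlinarith [sq_nonneg u1, sq_nonneg u2]
  have hu2 : u2 = 0 := by nlinarith [sq_nonneg u1, sq_nonneg u2]
  have hu0 : u0 = 0 := by nlinarith [sq_nonneg u0]
  exact ⟨hu0, hu1, hu2⟩

lemma centroid_vec {X Y Z : ℍ} {x y z : ℝ} (h : IsCentroid X x Y y Z z) :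
    x * g0 X + y * g0 Y = z * g0 Z ∧ x * g1 X + y * g1 Y = z * g1 Z ∧
      x * g2 X + y * g2 Y = z * g2 Z := by
  obtain ⟨hB, hm, hz⟩ := h
  rw [dist_comm Y Z] at hm hz
  have hB' : dist X Z + dist Z Y = dist X Y := hB
  have hca : Real.cosh (dist X Z) ^ 2 = Real.sinh (dist X Z) ^ 2 + 1 := Real.cosh_sq _
  have hcb : Real.cosh (dist Z Y) ^ 2 = Real.sinh (dist Z Y) ^ 2 + 1 := Real.cosh_sq _
  have pXX : g0 X * g0 X - g1 X * g1 X - g2 X * g2 X = 1 := by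
    rw [pair_eq X X, dist_self, Real.cosh_zero]
  have pYY : g0 Y * g0 Y - g1 Y * g1 Y - g2 Y * g2 Y = 1 := by
    rw [pair_eq Y Y, dist_self, Real.cosh_zero]
  have pZZ : g0 Z * g0 Z - g1 Z * g1 Z - g2 Z * g2 Z = 1 := by
    rw [pair_eq Z Z, dist_self, Real.cosh_zero]
  have pYX : g0 Y * g0 X - g1 Y * g1 X - g2 Y * g2 X =
      Real.cosh (dist X Z) * Real.cosh (dist Z Y) +
        Real.sinh (dist X Z) * Real.sinh (dist Z Y) := by
    rw [pair_eq Y X, dist_comm Y X, ← hB', Real.cosh_add]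
  have pXY : g0 X * g0 Y - g1 X * g1 Y - g2 X * g2 Y =
      Real.cosh (dist X Z) * Real.cosh (dist Z Y) +
        Real.sinh (dist X Z) * Real.sinh (dist Z Y) := by
    rw [pair_eq X Y, ← hB', Real.cosh_add]
  have pZX : g0 Z * g0 X - g1 Z * g1 X - g2 Z * g2 X = Real.cosh (dist X Z) := by
    rw [pair_eq Z X, dist_comm Z X]
  have pZY : g0 Z * g0 Y - g1 Z * g1 Y - g2 Z * g2 Y = Real.cosh (dist Z Y) := by
    rw [pair_eq Z Y]
  have pXZ : g0 X * g0 Z - g1 X * g1 Z - g2 X * g2 Z = Real.cosh (dist X Z) := by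
    rw [pair_eq X Z]
  have pYZ : g0 Y * g0 Z - g1 Y * g1 Z - g2 Y * g2 Z = Real.cosh (dist Z Y) := by
    rw [pair_eq Y Z, dist_comm Y Z]
  have e1 : (x * g0 X + y * g0 Y - z * g0 Z) * g0 X -
      (x * g1 X + y * g1 Y - z * g1 Z) * g1 X -
      (x * g2 X + y * g2 Y - z * g2 Z) * g2 X = 0 := by
    linear_combination x * pXX + y * pYX - z * pZX - Real.cosh (dist X Z) * hz -
      x * hca - Real.sinh (dist X Z) * hm
  have e2 : (x * g0 X + y * g0 Y - z * g0 Z) * g0 Y -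
      (x * g1 X + y * g1 Y - z * g1 Z) * g1 Y -
      (x * g2 X + y * g2 Y - z * g2 Z) * g2 Y = 0 := by
    linear_combination x * pXY + y * pYY - z * pZY - Real.cosh (dist Z Y) * hz -
      y * hcb + Real.sinh (dist Z Y) * hm
  have e3 : (x * g0 X + y * g0 Y - z * g0 Z) * g0 Z -
      (x * g1 X + y * g1 Y - z * g1 Z) * g1 Z -
      (x * g2 X + y * g2 Y - z * g2 Z) * g2 Z = 0 := by
    linear_combination x * pXZ + y * pYZ - z * pZZ - hz
  have h2 : (x * g0 X + y * g0 Y - z * g0 Z) ^ 2 -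
      (x * g1 X + y * g1 Y - z * g1 Z) ^ 2 -
      (x * g2 X + y * g2 Y - z * g2 Z) ^ 2 = 0 := by
    linear_combination x * e1 + y * e2 - z * e3
  obtain ⟨h0, h1, h2'⟩ := perp_null (g0 X) (g1 X) (g2 X)
    (x * g0 X + y * g0 Y - z * g0 Z) (x * g1 X + y * g1 Y - z * g1 Z)
    (x * g2 X + y * g2 Y - z * g2 Z) (by linear_combination pXX) e1 h2
  exact ⟨by linarith, by linarith, by linarith⟩

lemma centroid_symm {X Y Z : ℍ} {x y z : ℝ} (h : IsCentroid X x Y y Z z) :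
    IsCentroid Y y X x Z z := by
  obtain ⟨h1, h2, h3⟩ := h
  refine ⟨?_, h2.symm, by linarith⟩
  unfold HBtw at h1 ⊢
  rw [dist_comm Y Z, dist_comm Z X, dist_comm Y X]
  linarith

/-- Proposition 3.3: the binary centroid operation `*` on point-masses in the
hyperbolic plane (here, the upper half-plane model) is commutative and associative. -/
theorem centroid_comm_assoc :
    (∀ (X Y Z : ℍ) (x y z : ℝ), 0 < x → 0 < y →
      (IsCentroid X x Y y Z z ↔ IsCentroid Y y X x Z z)) ∧
    (∀ (X Y Z : ℍ) (x y z : ℝ), 0 < x → 0 < y → 0 < z →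
      ∀ (R : ℍ) (r : ℝ) (T : ℍ) (t : ℝ) (P : ℍ) (p : ℝ) (T' : ℍ) (t' : ℝ),
        IsCentroid X x Y y R r → IsCentroid R r Z z T t →
        IsCentroid Y y Z z P p → IsCentroid X x P p T' t' →
          T = T' ∧ t = t') := by
  constructor
  · intro X Y Z x y z _ _
    exact ⟨centroid_symm, centroid_symm⟩
  · intro X Y Z x y z hx hy hz R r T t P p T' t' h1 h2 h3 h4
    have hr : 0 < r := by
      have := h1.2.2
      nlinarith [Real.cosh_pos (dist X R), Real.cosh_pos (dist Y R)]
    have hp : 0 < p := by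
      have := h3.2.2
      nlinarith [Real.cosh_pos (dist Y P), Real.cosh_pos (dist Z P)]
    have ht : 0 < t := by
      have := h2.2.2
      nlinarith [Real.cosh_pos (dist R T), Real.cosh_pos (dist Z T)]
    have ht' : 0 < t' := by
      have := h4.2.2
      nlinarith [Real.cosh_pos (dist X T'), Real.cosh_pos (dist P T')]
    obtain ⟨a1, b1, c1⟩ := centroid_vec h1
    obtain ⟨a2, b2, c2⟩ := centroid_vec h2
    obtain ⟨a3, b3, c3⟩ := centroid_vec h3
    obtain ⟨a4, b4, c4⟩ := centroid_vec h4
    have hT0 : t * g0 T = t' * g0 T' := by linear_combination a3 + a4 - a1 - a2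
    have hT1 : t * g1 T = t' * g1 T' := by linear_combination b3 + b4 - b1 - b2
    have hT2 : t * g2 T = t' * g2 T' := by linear_combination c3 + c4 - c1 - c2
    have pTT : g0 T * g0 T - g1 T * g1 T - g2 T * g2 T = 1 := by
      rw [pair_eq T T, dist_self, Real.cosh_zero]
    have pT'T' : g0 T' * g0 T' - g1 T' * g1 T' - g2 T' * g2 T' = 1 := by
      rw [pair_eq T' T', dist_self, Real.cosh_zero]
    have htt : t ^ 2 = t' ^ 2 := by
      linear_combination (t * g0 T + t' * g0 T') * hT0 - (t * g1 T + t' * g1 T') * hT1 -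
        (t * g2 T + t' * g2 T') * hT2 - t ^ 2 * pTT + t' ^ 2 * pT'T'
    have hteq : t = t' := sq_inj' ht ht' htt
    have htne : t ≠ 0 := ne_of_gt ht
    rw [hteq] at hT0 hT1 hT2
    have htne' : t' ≠ 0 := ne_of_gt ht'
    have e0 : g0 T = g0 T' := mul_left_cancel₀ htne' hT0
    have e1 : g1 T = g1 T' := mul_left_cancel₀ htne' hT1
    have e2 : g2 T = g2 T' := mul_left_cancel₀ htne' hT2
    have himT := T.im_pos
    have himT' := T'.im_pos
    have him : T.im = T'.im := by
      have h02 : (1 : ℝ) / T.im = 1 / T'.im := by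
        rw [← g02 T, ← g02 T']
        rw [e0, e2]
      rw [div_eq_div_iff (ne_of_gt himT) (ne_of_gt himT')] at h02
      linarith
    have hre : T.re = T'.re := by
      unfold g1 at e1
      rw [him] at e1
      field_simp at e1
      exact e1
    exact ⟨UpperHalfPlane.ext' hre him, hteq⟩

end
end

section
/- Let (X,x), (Y,y) be point-masses in the hyperbolic plane and let (Z,z) = (X,x)*(Y,y) be their centroid. Then for every hyperbolic line m, the signed moment satisfies M_m(Z,z) = M_m(X,x) + M_m(Y,y), where M_m(P,p) = σ_m(P)·p·sinh(d(P,m)) and σ_m(P) = +1, -1, or 0 according as P is in the left half-plane of the directed line m, the right half-plane, or on m. -/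
open Real UpperHalfPlane

noncomputable section

/-- A hyperbolic line in the upper half-plane model: a vertical ray or a
semicircle centered on the real axis. -/
inductive HLine : Type
  | vertical (a : ℝ) : HLine
  | circle (c r : ℝ) (hr : 0 < r) : HLine

/-- The set of points of a hyperbolic line. -/
def HLine.carrier : HLine → Set ℍ
  | .vertical a => {z : ℍ | (z : ℂ).re = a}
  | .circle c r _ => {z : ℍ | ‖(z : ℂ) - (c : ℂ)‖ = r}

/-- The side function of a (directed) hyperbolic line: `1` on one open half-plane,
`-1` on the other, `0` on the line itself. -/
def HLine.sgn : HLine → ℍ → ℝ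
  | .vertical a, z => Real.sign ((z : ℂ).re - a)
  | .circle c r _, z => Real.sign (‖(z : ℂ) - (c : ℂ)‖ - r)


lemma sign_mul_abs' (t : ℝ) : Real.sign t * |t| = t := by
  rcases lt_trichotomy t 0 with h|h|h
  · rw [Real.sign_of_neg h, abs_of_neg h]; ring
  · simp [h]
  · rw [Real.sign_of_pos h, abs_of_pos h]; ring

lemma infDist_eq_of_min {s : Set ℍ} {P Q₀ : ℍ} (hQ : Q₀ ∈ s)
    (h : ∀ Q ∈ s, dist P Q₀ ≤ dist P Q) : Metric.infDist P s = dist P Q₀ := by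
  haveI : Nonempty s := ⟨⟨Q₀, hQ⟩⟩
  refine le_antisymm (Metric.infDist_le_dist_of_mem hQ) ?_
  rw [Metric.infDist_eq_iInf]
  exact le_ciInf fun y => h y y.2

lemma coshd (P Q : ℍ) : Real.cosh (dist P Q)
    = 1 + (((P:ℂ).re - (Q:ℂ).re)^2 + ((P:ℂ).im - (Q:ℂ).im)^2) / (2 * (P:ℂ).im * (Q:ℂ).im) := by
  have h2 : dist (P:ℂ) (Q:ℂ)^2 = ((P:ℂ).re-(Q:ℂ).re)^2 + ((P:ℂ).im-(Q:ℂ).im)^2 := by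
    rw [Complex.dist_eq, Complex.sq_norm, Complex.normSq_apply]
    simp [Complex.sub_re, Complex.sub_im]; ring
  rw [UpperHalfPlane.cosh_dist, h2, UpperHalfPlane.coe_im, UpperHalfPlane.coe_im]

lemma im_pos' (P : ℍ) : 0 < (P:ℂ).im := by rw [UpperHalfPlane.coe_im]; exact P.im_pos

lemma dist_le_of_cosh_le {P Q₀ Q : ℍ} (h : Real.cosh (dist P Q₀) ≤ Real.cosh (dist P Q)) :
    dist P Q₀ ≤ dist P Q := by
  have := Real.cosh_le_cosh.mp h
  rwa [abs_of_nonneg dist_nonneg, abs_of_nonneg dist_nonneg] at this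

lemma sinh_of_cosh_eq {d v : ℝ} (hd : 0 ≤ d) (hv : 0 ≤ v)
    (h : Real.cosh d ^ 2 = v ^ 2 + 1) : Real.sinh d = v := by
  have h1 : Real.sinh d ^ 2 = v ^ 2 := by
    have := Real.cosh_sq d; linarith
  have h2 : 0 ≤ Real.sinh d := Real.sinh_nonneg_iff.mpr hd
  calc Real.sinh d = √(Real.sinh d ^ 2) := (Real.sqrt_sq h2).symm
    _ = √(v^2) := by rw [h1]
    _ = v := Real.sqrt_sq hv

lemma abs_sq' (w : ℂ) : ‖w‖ ^ 2 = w.re^2 + w.im^2 := by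
  rw [Complex.sq_norm, Complex.normSq_apply]; ring

def hu0 (P : ℍ) : ℝ := ((P:ℂ).re^2 + (P:ℂ).im^2 + 1) / (2*(P:ℂ).im)
def hu1 (P : ℍ) : ℝ := (P:ℂ).re / (P:ℂ).im
def hu2 (P : ℍ) : ℝ := ((P:ℂ).re^2 + (P:ℂ).im^2 - 1) / (2*(P:ℂ).im)

lemma mink (P Q : ℍ) : hu1 P * hu1 Q + hu2 P * hu2 Q - hu0 P * hu0 Q
    = -Real.cosh (dist P Q) := by
  have hp := im_pos' P
  have hq := im_pos' Q
  rw [coshd, hu0, hu1, hu2, hu0, hu1, hu2]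
  field_simp
  ring

lemma hu0_pos (P : ℍ) : 0 < hu0 P := by
  have hp := im_pos' P
  apply div_pos (by positivity) (by positivity)

lemma aux1 (t0 t1 t2 w0 w1 w2 : ℝ) (ht0 : 0 < t0)
    (ht : t1^2 + t2^2 - t0^2 = -1)
    (h1 : w1*t1 + w2*t2 - w0*t0 = 0) (h2 : w1^2 + w2^2 - w0^2 = 0) :
    w0 = 0 ∧ w1 = 0 ∧ w2 = 0 := by
  have h1' : w1*t1 + w2*t2 = w0*t0 := by linarith
  have e1 : w0^2*t0^2 = (w1*t1+w2*t2)^2 := by rw [h1']; ring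
  have e2 : (w1*t1+w2*t2)^2 + (w1*t2 - w2*t1)^2 = (w1^2+w2^2)*(t1^2+t2^2) := by ring
  have h2' : w1^2+w2^2 = w0^2 := by linarith
  have ht' : t1^2+t2^2 = t0^2-1 := by linarith
  have e3 : (w1^2+w2^2)*(t1^2+t2^2) = w0^2*(t0^2-1) := by rw [h2', ht']
  have hle : w0^2 ≤ 0 := by nlinarith [sq_nonneg (w1*t2 - w2*t1)]
  have hw0 : w0 = 0 := by
    have : w0^2 = 0 := le_antisymm hle (sq_nonneg w0)
    exact pow_eq_zero_iff two_ne_zero |>.mp this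
  have h12 : w1^2 + w2^2 = 0 := by rw [hw0] at h2; linarith
  have hw1 : w1 = 0 := by nlinarith [sq_nonneg w1, sq_nonneg w2]
  have hw2 : w2 = 0 := by nlinarith [sq_nonneg w1, sq_nonneg w2]
  exact ⟨hw0, hw1, hw2⟩

lemma centroid_u (X Y Z : ℍ) (x y z : ℝ)
    (hc : IsCentroid X x Y y Z z) :
    (x * hu0 X + y * hu0 Y = z * hu0 Z) ∧
    (x * hu1 X + y * hu1 Y = z * hu1 Z) ∧
    (x * hu2 X + y * hu2 Y = z * hu2 Z) := by
  obtain ⟨hb, hm, hz⟩ := hc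
  have hdXY : dist X Y = dist X Z + dist Y Z := by
    rw [← hb, dist_comm Z Y]
  have hcXY : Real.cosh (dist X Y)
      = Real.cosh (dist X Z) * Real.cosh (dist Y Z)
        + Real.sinh (dist X Z) * Real.sinh (dist Y Z) := by
    rw [hdXY, Real.cosh_add]
  have eXX := mink X X; rw [dist_self, Real.cosh_zero] at eXX
  have eYY := mink Y Y; rw [dist_self, Real.cosh_zero] at eYY
  have eXY := mink X Y; rw [hcXY] at eXY
  have eZZ := mink Z Z; rw [dist_self, Real.cosh_zero] at eZZ
  have eXZ := mink X Z
  have eYZ := mink Y Z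
  have hsq1 := Real.cosh_sq (dist X Z)
  have hsq2 := Real.cosh_sq (dist Y Z)
  set a1 := Real.cosh (dist X Z)
  set a2 := Real.cosh (dist Y Z)
  set s1 := Real.sinh (dist X Z)
  set s2 := Real.sinh (dist Y Z)
  set w0 := x * hu0 X + y * hu0 Y - z * hu0 Z with hw0
  set w1 := x * hu1 X + y * hu1 Y - z * hu1 Z with hw1
  set w2 := x * hu2 X + y * hu2 Y - z * hu2 Z with hw2
  have hBX : w1 * hu1 X + w2 * hu2 X - w0 * hu0 X = 0 := by
    rw [hw0, hw1, hw2]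
    linear_combination x*eXX + y*eXY - z*eXZ + a1*hz + x*hsq1 + s1*hm
  have hBY : w1 * hu1 Y + w2 * hu2 Y - w0 * hu0 Y = 0 := by
    rw [hw0, hw1, hw2]
    linear_combination x*eXY + y*eYY - z*eYZ + a2*hz + y*hsq2 - s2*hm
  have hBZ : w1 * hu1 Z + w2 * hu2 Z - w0 * hu0 Z = 0 := by
    rw [hw0, hw1, hw2]
    linear_combination x*eXZ + y*eYZ - z*eZZ + hz
  have hBW : w1^2 + w2^2 - w0^2 = 0 := by
    linear_combination x*hBX + y*hBY - z*hBZ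
  obtain ⟨h0, h1, h2⟩ := aux1 (hu0 X) (hu1 X) (hu2 X) w0 w1 w2 (hu0_pos X) (by linear_combination eXX) hBX hBW
  rw [hw0] at h0; rw [hw1] at h1; rw [hw2] at h2
  exact ⟨by linarith, by linarith, by linarith⟩

lemma sinh_infDist_vertical (P : ℍ) (a : ℝ) :
    Real.sinh (Metric.infDist P (HLine.vertical a).carrier)
      = |(P:ℂ).re - a| / (P:ℂ).im := by
  have hq : 0 < (P:ℂ).im := im_pos' P
  set p := (P:ℂ).re with hp
  set q := (P:ℂ).im with hqdef
  set R := Real.sqrt ((p-a)^2 + q^2) with hRdef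
  have hR2 : R^2 = (p-a)^2 + q^2 := Real.sq_sqrt (by positivity)
  have hR0 : 0 ≤ R := Real.sqrt_nonneg _
  have hR : 0 < R := by nlinarith
  set Q₀ : ℍ := ⟨⟨a, R⟩, hR⟩ with hQ₀
  have hQre : (Q₀:ℂ).re = a := rfl
  have hQim : (Q₀:ℂ).im = R := rfl
  have hmem : Q₀ ∈ (HLine.vertical a).carrier := hQre
  have hcosh0 : Real.cosh (dist P Q₀) = R / q := by
    rw [coshd, hQre, hQim, ← hp, ← hqdef]
    field_simp
    linear_combination (-1)*hR2
  have hmin : ∀ Q ∈ (HLine.vertical a).carrier, dist P Q₀ ≤ dist P Q := by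
    intro Q hQ
    apply dist_le_of_cosh_le
    rw [hcosh0, coshd, hQ, ← hp, ← hqdef]
    have ht : 0 < (Q:ℂ).im := im_pos' Q
    rw [div_le_iff₀ hq]
    have key : (1 + ((p - a)^2 + (q - (Q:ℂ).im)^2) / (2 * q * (Q:ℂ).im)) * q
        = (2*q*(Q:ℂ).im + (p-a)^2 + (q - (Q:ℂ).im)^2) / (2 * (Q:ℂ).im) := by
      field_simp; ring
    rw [key, le_div_iff₀ (by positivity)]
    nlinarith [sq_nonneg (R - (Q:ℂ).im)]
  rw [infDist_eq_of_min hmem hmin]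
  apply sinh_of_cosh_eq dist_nonneg (by positivity)
  rw [hcosh0]
  field_simp
  linear_combination hR2 - sq_abs (p - a)

lemma frac_id (p q u v c r s : ℝ) (hq : 0 < q) (hv : 0 < v)
    (hs2 : s^2 = (p-c)^2 + q^2) (hm : (u-c)^2 + v^2 = r^2) :
    1 + ((p-u)^2 + (q-v)^2) / (2*q*v) = (s^2 + r^2 - 2*(p-c)*(u-c)) / (2*q*v) := by
  field_simp
  linear_combination (-1)*hs2 + hm

lemma circle_min_aux (q r A B C α β : ℝ) (hq : 0 < q) (hr : 0 < r) (hA : 0 < A)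
    (hβ : 0 < β) (hC2 : C^2 = A^2 - B^2) (hm : α^2 + β^2 = r^2) :
    C ≤ (2*q*r*A - 2*(q*B)*α) / (2*q*β) := by
  rw [le_div_iff₀ (by positivity)]
  have key : B*α + C*β ≤ r*A := by
    nlinarith [sq_nonneg (B*β - C*α), mul_pos hr hA]
  nlinarith [mul_le_mul_of_nonneg_left key (le_of_lt hq)]

lemma sinh_infDist_circle (P : ℍ) (c r : ℝ) (hr : 0 < r) :
    Real.sinh (Metric.infDist P (HLine.circle c r hr).carrier)
      = |‖(P:ℂ) - c‖^2 - r^2| / (2*r*(P:ℂ).im) := by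
  have hq : 0 < (P:ℂ).im := im_pos' P
  set p := (P:ℂ).re with hp
  set q := (P:ℂ).im with hqdef
  set s := ‖(P:ℂ) - (c:ℂ)‖ with hsdef
  have hs2 : s^2 = (p-c)^2 + q^2 := by
    rw [hsdef, abs_sq']
    simp only [Complex.sub_re, Complex.sub_im, Complex.ofReal_re, Complex.ofReal_im, sub_zero]
    rfl
  have hs0 : 0 ≤ s := norm_nonneg _
  have hs : 0 < s := by nlinarith
  set A := (s^2 + r^2) / (2*q*r) with hAdef
  set B := (p - c) / q with hBdef
  have hA : 0 < A := by apply div_pos (by positivity) (by positivity)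
  have hAeq : s^2 + r^2 = 2*q*r*A := by rw [hAdef]; field_simp
  have hBeq : p - c = q*B := by rw [hBdef]; field_simp
  have hAB2 : (2*q*r*A)^2 - (2*r*(q*B))^2 = (2*q*r)^2 + (s^2-r^2)^2 := by
    rw [← hAeq, ← hBeq]
    linear_combination (4*r^2)*hs2
  have h2qr : 0 < (2*q*r)^2 := by positivity
  have hge : 1 ≤ A^2 - B^2 := by nlinarith [sq_nonneg (s^2 - r^2)]
  set C := Real.sqrt (A^2 - B^2) with hCdef
  have hC2 : C^2 = A^2 - B^2 := Real.sq_sqrt (by linarith)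
  have hC1 : 1 ≤ C := by
    rw [hCdef, show (1:ℝ) = Real.sqrt 1 by simp]
    exact Real.sqrt_le_sqrt hge
  have hC0 : 0 < C := lt_of_lt_of_le one_pos hC1
  have hA' : A ≠ 0 := ne_of_gt hA
  have hq' : q ≠ 0 := ne_of_gt hq
  have hr' : r ≠ 0 := ne_of_gt hr
  have hQim : 0 < r*C/A := by positivity
  set Q₀ : ℍ := ⟨⟨c + r*B/A, r*C/A⟩, hQim⟩ with hQ₀
  have hQre : (Q₀:ℂ).re = c + r*B/A := rfl
  have hQime : (Q₀:ℂ).im = r*C/A := rfl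
  clear_value s A B C Q₀
  have hmemQ₀ : ((Q₀:ℂ).re - c)^2 + (Q₀:ℂ).im^2 = r^2 := by
    rw [hQre, hQime]
    field_simp [hA']
    linear_combination (r^2)*hC2
  have hmem : Q₀ ∈ (HLine.circle c r hr).carrier := by
    have h1 : ‖(Q₀:ℂ) - (c:ℂ)‖^2 = r^2 := by
      rw [abs_sq']
      simp only [Complex.sub_re, Complex.sub_im, Complex.ofReal_re, Complex.ofReal_im, sub_zero]
      linear_combination hmemQ₀
    have h2 : 0 ≤ ‖(Q₀:ℂ) - (c:ℂ)‖ := norm_nonneg _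
    show ‖(Q₀:ℂ) - (c:ℂ)‖ = r
    calc ‖(Q₀:ℂ) - (c:ℂ)‖ = √(‖(Q₀:ℂ) - (c:ℂ)‖^2) := (Real.sqrt_sq h2).symm
      _ = √(r^2) := by rw [h1]
      _ = r := Real.sqrt_sq hr.le
  have hcoshQ : ∀ Q : ℍ, ((Q:ℂ).re - c)^2 + (Q:ℂ).im^2 = r^2 →
      Real.cosh (dist P Q) = (s^2 + r^2 - 2*(p-c)*((Q:ℂ).re - c)) / (2*q*(Q:ℂ).im) := by
    intro Q hmemQ
    have ht : 0 < (Q:ℂ).im := im_pos' Q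
    rw [coshd, ← hp, ← hqdef]
    exact frac_id p q (Q:ℂ).re (Q:ℂ).im c r s hq ht hs2 hmemQ
  have hcosh0 : Real.cosh (dist P Q₀) = C := by
    have hC' : C ≠ 0 := ne_of_gt hC0
    rw [hcoshQ Q₀ hmemQ₀, hQre, hQime, hAeq, hBeq]
    field_simp [hA', hq', hr', hC']
    linear_combination (-r)*hC2
  have hmin : ∀ Q ∈ (HLine.circle c r hr).carrier, dist P Q₀ ≤ dist P Q := by
    intro Q hQ
    have habs : ‖(Q:ℂ) - (c:ℂ)‖ = r := hQ
    have hmemQ : ((Q:ℂ).re - c)^2 + (Q:ℂ).im^2 = r^2 := by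
      have h3 := abs_sq' ((Q:ℂ) - (c:ℂ))
      rw [habs] at h3
      simp only [Complex.sub_re, Complex.sub_im, Complex.ofReal_re, Complex.ofReal_im,
        sub_zero] at h3
      linarith [h3]
    apply dist_le_of_cosh_le
    rw [hcosh0, hcoshQ Q hmemQ, hAeq, hBeq]
    have ht : 0 < (Q:ℂ).im := im_pos' Q
    exact circle_min_aux q r A B C ((Q:ℂ).re - c) ((Q:ℂ).im) hq hr hA ht hC2 hmemQ
  rw [infDist_eq_of_min hmem hmin]
  apply sinh_of_cosh_eq dist_nonneg (by positivity)
  rw [hcosh0, hC2, div_pow, sq_abs]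
  field_simp
  linear_combination hAB2

lemma key_comb (X Y Z : ℍ) (x y z : ℝ) (hc : IsCentroid X x Y y Z z) (α β γ : ℝ) :
    z * ((α*((Z:ℂ).re^2+(Z:ℂ).im^2) + β*(Z:ℂ).re + γ) / (Z:ℂ).im)
      = x * ((α*((X:ℂ).re^2+(X:ℂ).im^2) + β*(X:ℂ).re + γ) / (X:ℂ).im)
        + y * ((α*((Y:ℂ).re^2+(Y:ℂ).im^2) + β*(Y:ℂ).re + γ) / (Y:ℂ).im) := by
  obtain ⟨h0, h1, h2⟩ := centroid_u X Y Z x y z hc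
  simp only [hu0, hu1, hu2] at h0 h1 h2
  linear_combination (-(α+γ))*h0 + (-β)*h1 + (-(α-γ))*h2

/-- Theorem 3.4 (additivity of moments): if `(Z,z)` is the centroid of `(X,x)` and
`(Y,y)`, then for every directed hyperbolic line `m` (a line `ℓ` with an orientation
`ε = ±1`), the signed moment of `(Z,z)` is the sum of the signed moments of `(X,x)`
and `(Y,y)`. -/
theorem moment_additive (X Y Z : ℍ) (x y z : ℝ) (hx : 0 < x) (hy : 0 < y)
    (hc : IsCentroid X x Y y Z z) (ℓ : HLine) (ε : ℝ) (hε : ε = 1 ∨ ε = -1) :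
    ε * ℓ.sgn Z * z * Real.sinh (Metric.infDist Z ℓ.carrier)
      = ε * ℓ.sgn X * x * Real.sinh (Metric.infDist X ℓ.carrier)
        + ε * ℓ.sgn Y * y * Real.sinh (Metric.infDist Y ℓ.carrier) := by
  cases ℓ with
  | vertical a =>
    simp only [HLine.sgn]
    rw [sinh_infDist_vertical X a, sinh_infDist_vertical Y a, sinh_infDist_vertical Z a]
    have hsgn : ∀ (P : ℍ) (w : ℝ),
        ε * Real.sign ((P:ℂ).re - a) * w * (|(P:ℂ).re - a| / (P:ℂ).im)
          = ε * w * (((P:ℂ).re - a) / (P:ℂ).im) := by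
      intro P w
      linear_combination (ε * w / (P:ℂ).im) * sign_mul_abs' ((P:ℂ).re - a)
    rw [hsgn X x, hsgn Y y, hsgn Z z]
    have hkey := key_comb X Y Z x y z hc 0 1 (-a)
    linear_combination ε * hkey
  | circle c r hr =>
    simp only [HLine.sgn]
    rw [sinh_infDist_circle X c r hr, sinh_infDist_circle Y c r hr, sinh_infDist_circle Z c r hr]
    have hsgn : ∀ (P : ℍ) (w : ℝ),
        ε * Real.sign (‖(P:ℂ) - (c:ℂ)‖ - r) * w
            * (|‖(P:ℂ) - (c:ℂ)‖^2 - r^2| / (2*r*(P:ℂ).im))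
          = ε * w * ((‖(P:ℂ) - (c:ℂ)‖^2 - r^2) / (2*r*(P:ℂ).im)) := by
      intro P w
      set s := ‖(P:ℂ) - (c:ℂ)‖ with hsdef
      have hs0 : 0 ≤ s := norm_nonneg _
      have hsr : 0 < s + r := by linarith
      have h1 : |s^2 - r^2| = |s - r| * (s + r) := by
        rw [← abs_of_pos hsr, ← abs_mul]
        congr 1; ring
      have h2 : Real.sign (s - r) * |s^2 - r^2| = s^2 - r^2 := by
        rw [h1, ← mul_assoc, sign_mul_abs']; ring
      linear_combination (ε * w / (2*r*(P:ℂ).im)) * h2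
    rw [hsgn X x, hsgn Y y, hsgn Z z]
    have habsq : ∀ P : ℍ, ‖(P:ℂ) - (c:ℂ)‖^2 = ((P:ℂ).re - c)^2 + (P:ℂ).im^2 := by
      intro P
      rw [abs_sq']
      simp only [Complex.sub_re, Complex.sub_im, Complex.ofReal_re, Complex.ofReal_im, sub_zero]
    rw [habsq X, habsq Y, habsq Z]
    have hkey := key_comb X Y Z x y z hc 1 (-2*c) (c^2 - r^2)
    linear_combination (ε / (2*r)) * hkey
end
end

section
/- Let X = {(X_i, x_i) : i = 1,...,n} be a finite system of point-masses in the hyperbolic plane with center of mass (C, c) (defined by iterating the binary centroid operation *). Then c = Σ_{i=1}^n x_i·cosh(d(X_i, C)). -/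
open Real UpperHalfPlane

noncomputable section

/-- `(C, c)` is the center of mass of the finite point-mass system
`(X i, x i), i = 0, …, n`, obtained by iterating the binary centroid operation. -/
def IsSystemCentroid : {n : ℕ} → (Fin (n + 1) → ℍ) → (Fin (n + 1) → ℝ) → ℍ → ℝ → Prop
  | 0, X, x, C, c => C = X 0 ∧ c = x 0
  | n + 1, X, x, C, c => ∃ C' c', IsSystemCentroid (Fin.init X) (Fin.init x) C' c' ∧
      IsCentroid C' c' (X (Fin.last (n + 1))) (x (Fin.last (n + 1))) C c

/-- Time coordinate of the hyperboloid-model embedding of `ℍ`. -/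
def tH (w : ℍ) : ℝ := (w.re ^ 2 + w.im ^ 2 + 1) / (2 * w.im)

/-- First space coordinate of the hyperboloid-model embedding of `ℍ`. -/
def pH (w : ℍ) : ℝ := w.re / w.im

/-- Second space coordinate of the hyperboloid-model embedding of `ℍ`. -/
def qH (w : ℍ) : ℝ := (w.re ^ 2 + w.im ^ 2 - 1) / (2 * w.im)

lemma cosh_dist_bilin (z w : ℍ) :
    Real.cosh (dist z w) = tH z * tH w - pH z * pH w - qH z * qH w := by
  rw [UpperHalfPlane.cosh_dist']
  have hz := z.im_pos
  have hw := w.im_pos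
  unfold tH pH qH
  field_simp
  ring

lemma norm_bilin (w : ℍ) : tH w ^ 2 - pH w ^ 2 - qH w ^ 2 = 1 := by
  have h : Real.cosh (dist w w) = tH w * tH w - pH w * pH w - qH w * qH w :=
    cosh_dist_bilin w w
  rw [dist_self, Real.cosh_zero] at h
  nlinarith [h]

lemma tH_pos (w : ℍ) : 0 < tH w := by
  have := w.im_pos
  unfold tH
  positivity

set_option maxHeartbeats 1000000 in
/-- Key lemma: a binary centroid satisfies the cosh-linearity identity against any point. -/
lemma centroid_lincomb {X Y Z : ℍ} {x y z : ℝ} (hx : 0 < x) (hy : 0 < y)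
    (h : IsCentroid X x Y y Z z) (P : ℍ) :
    z * Real.cosh (dist Z P) = x * Real.cosh (dist X P) + y * Real.cosh (dist Y P) := by
  obtain ⟨hb, hbal, hz⟩ := h
  set a := dist X Z with ha
  have hYZ : dist Y Z = dist Z Y := dist_comm Y Z
  set b := dist Z Y with hbdef
  rw [hYZ] at hbal hz
  have hXY : dist X Y = a + b := hb.symm
  -- bilinear form equations
  have E1 : Real.cosh a = tH X * tH Z - pH X * pH Z - qH X * qH Z := cosh_dist_bilin X Z
  have E2 : Real.cosh b = tH Z * tH Y - pH Z * pH Y - qH Z * qH Y := cosh_dist_bilin Z Y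
  have E3 : Real.cosh (a + b) = tH X * tH Y - pH X * pH Y - qH X * qH Y := by
    rw [← hXY]; exact cosh_dist_bilin X Y
  have NX := norm_bilin X
  have NY := norm_bilin Y
  have NZ := norm_bilin Z
  set T := x * tH X + y * tH Y - z * tH Z with hT
  set Pc := x * pH X + y * pH Y - z * pH Z with hP
  set Qc := x * qH X + y * qH Y - z * qH Z with hQ
  -- V is null
  have hca : Real.cosh a ^ 2 = 1 + Real.sinh a ^ 2 := by
    have := Real.cosh_sq_sub_sinh_sq a; linarith
  have hcb : Real.cosh b ^ 2 = 1 + Real.sinh b ^ 2 := by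
    have := Real.cosh_sq_sub_sinh_sq b; linarith
  have hadd : Real.cosh (a + b) = Real.cosh a * Real.cosh b + Real.sinh a * Real.sinh b :=
    Real.cosh_add a b
  have hnull : T ^ 2 - Pc ^ 2 - Qc ^ 2 = 0 := by
    have expand : T ^ 2 - Pc ^ 2 - Qc ^ 2 =
        x ^ 2 * (tH X ^ 2 - pH X ^ 2 - qH X ^ 2) + y ^ 2 * (tH Y ^ 2 - pH Y ^ 2 - qH Y ^ 2) +
        z ^ 2 * (tH Z ^ 2 - pH Z ^ 2 - qH Z ^ 2) +
        2 * x * y * (tH X * tH Y - pH X * pH Y - qH X * qH Y) -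
        2 * x * z * (tH X * tH Z - pH X * pH Z - qH X * qH Z) -
        2 * y * z * (tH Z * tH Y - pH Z * pH Y - qH Z * qH Y) := by ring
    rw [expand, NX, NY, NZ, ← E1, ← E2, ← E3, hadd]
    linear_combination (z - x * Real.cosh a - y * Real.cosh b) * hz -
      (x * Real.sinh a - y * Real.sinh b) * hbal - x ^ 2 * hca - y ^ 2 * hcb
  -- V is orthogonal to the timelike vector F Z
  have horth : T * tH Z - Pc * pH Z - Qc * qH Z = 0 := by
    have expand : T * tH Z - Pc * pH Z - Qc * qH Z =
        x * (tH X * tH Z - pH X * pH Z - qH X * qH Z) +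
        y * (tH Z * tH Y - pH Z * pH Y - qH Z * qH Y) -
        z * (tH Z ^ 2 - pH Z ^ 2 - qH Z ^ 2) := by ring
    rw [expand, ← E1, ← E2, NZ]
    linarith [hz]
  -- hence V = 0
  have htZ := tH_pos Z
  have e1 : Pc ^ 2 + Qc ^ 2 = T ^ 2 := by linarith
  have e2 : pH Z ^ 2 + qH Z ^ 2 = tH Z ^ 2 - 1 := by linarith
  have h4 : T ^ 2 * tH Z ^ 2 = (Pc * pH Z + Qc * qH Z) ^ 2 := by
    linear_combination (T * tH Z + Pc * pH Z + Qc * qH Z) * horth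
  have h5 : (Pc * pH Z + Qc * qH Z) ^ 2 ≤ (Pc ^ 2 + Qc ^ 2) * (pH Z ^ 2 + qH Z ^ 2) := by
    have hcs : (Pc ^ 2 + Qc ^ 2) * (pH Z ^ 2 + qH Z ^ 2) - (Pc * pH Z + Qc * qH Z) ^ 2 =
        (Pc * qH Z - Qc * pH Z) ^ 2 := by ring
    linarith [sq_nonneg (Pc * qH Z - Qc * pH Z), hcs]
  have h6 : (Pc ^ 2 + Qc ^ 2) * (pH Z ^ 2 + qH Z ^ 2) = T ^ 2 * (tH Z ^ 2 - 1) := by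
    rw [e1, e2]
  have h7 : T ^ 2 * (tH Z ^ 2 - 1) = T ^ 2 * tH Z ^ 2 - T ^ 2 := by ring
  have hT2 : T ^ 2 ≤ 0 := by linarith [h4, h5, h6, h7]
  have hTsq : T ^ 2 = 0 := le_antisymm hT2 (sq_nonneg T)
  have hT0 : T = 0 := by
    have := sq_eq_zero_iff.mp hTsq
    simpa using this
  have hPsq : Pc ^ 2 = 0 := le_antisymm (by linarith [sq_nonneg Qc]) (sq_nonneg Pc)
  have hQsq : Qc ^ 2 = 0 := le_antisymm (by linarith [sq_nonneg Pc]) (sq_nonneg Qc)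
  have hP0 : Pc = 0 := by
    have := sq_eq_zero_iff.mp hPsq
    simpa using this
  have hQ0 : Qc = 0 := by
    have := sq_eq_zero_iff.mp hQsq
    simpa using this
  -- conclude
  have FX := cosh_dist_bilin X P
  have FY := cosh_dist_bilin Y P
  have FZ := cosh_dist_bilin Z P
  have : T * tH P - Pc * pH P - Qc * qH P = 0 := by rw [hT0, hP0, hQ0]; ring
  rw [hT, hP, hQ] at this
  rw [FX, FY, FZ]
  linear_combination -this

lemma system_lincomb (n : ℕ) (X : Fin (n + 1) → ℍ) (x : Fin (n + 1) → ℝ)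
    (hx : ∀ i, 0 < x i) (C : ℍ) (c : ℝ) (h : IsSystemCentroid X x C c) (P : ℍ) :
    c * Real.cosh (dist C P) = ∑ i, x i * Real.cosh (dist (X i) P) := by
  induction n generalizing C c P with
  | zero =>
    obtain ⟨hC, hc⟩ := h
    simp [hC, hc]
  | succ n ih =>
    obtain ⟨C', c', hsys, hcent⟩ := h
    have hx' : ∀ i, 0 < Fin.init x i := fun i => hx i.castSucc
    have ih' := ih (Fin.init X) (Fin.init x) hx' C' c' hsys
    have hc'pos : 0 < c' := by
      have := ih' C'
      rw [dist_self, Real.cosh_zero, mul_one] at this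
      rw [this]
      exact Finset.sum_pos (fun i _ => mul_pos (hx' i)
        (lt_of_lt_of_le one_pos (Real.one_le_cosh _))) Finset.univ_nonempty
    have key := centroid_lincomb hc'pos (hx (Fin.last (n + 1))) hcent P
    rw [key, ih' P,
      Fin.sum_univ_castSucc (f := fun i : Fin (n + 2) => x i * Real.cosh (dist (X i) P))]
    simp [Fin.init]

/-- Theorem 3.7: if `(C, c)` is the center of mass of the finite point-mass system
`{(X i, x i)}`, then `c = Σ x i · cosh(d(X i, C))`. -/
theorem mass_eq_sum_cosh (n : ℕ) (X : Fin (n + 1) → ℍ) (x : Fin (n + 1) → ℝ)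
    (hx : ∀ i, 0 < x i) (C : ℍ) (c : ℝ) (h : IsSystemCentroid X x C c) :
    c = ∑ i, x i * Real.cosh (dist (X i) C) := by
  have := system_lincomb n X x hx C c h C
  rwa [dist_self, Real.cosh_zero, mul_one] at this
end
end

section
/- Two point-masses (X,x) and (Y,y) in the hyperbolic plane have equal unsigned moments with respect to a line m that intersects the line XY if and only if m passes through their internal centroid or their external centroid. -/
open Real UpperHalfPlane

noncomputable section

set_option maxHeartbeats 1600000

section AuxLemmas

private lemma eq_of_sq_eq' {a b : ℝ} (ha : 0 ≤ a) (hb : 0 ≤ b) (h : a^2 = b^2) : a = b := by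
  nlinarith [sq_nonneg (a-b), sq_nonneg (a+b)]

private lemma cosh_inj_nonneg {d e : ℝ} (hd : 0 ≤ d) (he : 0 ≤ e)
    (h : Real.cosh d = Real.cosh e) : d = e := by
  have h1 := Real.cosh_le_cosh.mp h.le
  have h2 := Real.cosh_le_cosh.mp h.ge
  rw [abs_of_nonneg hd, abs_of_nonneg he] at h1 h2
  linarith

private lemma sinh_dist'' (z w : ℍ) : Real.sinh (dist z w) =
    ‖(z:ℂ) - w‖ * ‖(z:ℂ) - (starRingEnd ℂ) w‖ / (2 * z.im * w.im) := by
  have h : dist z w = 2 * (dist z w / 2) := by ring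
  rw [h, Real.sinh_two_mul, UpperHalfPlane.sinh_half_dist, UpperHalfPlane.cosh_half_dist,
    Complex.dist_eq, Complex.dist_eq]
  have hz : (0:ℝ) < z.im := z.im_pos
  have hw : (0:ℝ) < w.im := w.im_pos
  have hs : Real.sqrt (z.im * w.im) ^ 2 = z.im * w.im := Real.sq_sqrt (by positivity)
  have hsp : (0:ℝ) < Real.sqrt (z.im * w.im) := Real.sqrt_pos.mpr (by positivity)
  have hz2 : Real.sqrt z.im ^ 2 = z.im := Real.sq_sqrt hz.le
  have hw2 : Real.sqrt w.im ^ 2 = w.im := Real.sq_sqrt hw.le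
  set C := ‖(z:ℂ) - w‖ * ‖(z:ℂ) - (starRingEnd ℂ) w‖ with hC
  field_simp
  linear_combination (-(‖(z:ℂ) - w‖ * ‖(z:ℂ) - (starRingEnd ℂ) w‖)) * hs

private lemma prod_abs_sq (z w : ℍ) :
    (‖(z:ℂ) - w‖ * ‖(z:ℂ) - (starRingEnd ℂ) w‖)^2 =
      ((z.re - w.re)^2 + (z.im - w.im)^2) * ((z.re - w.re)^2 + (z.im + w.im)^2) := by
  rw [mul_pow, Complex.sq_norm, Complex.sq_norm, Complex.normSq_apply, Complex.normSq_apply]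
  simp only [Complex.sub_re, Complex.sub_im, Complex.conj_re, Complex.conj_im, coe_re, coe_im,
    Complex.ofReal_re, Complex.ofReal_im]
  ring

private lemma abs_sub_sq' (z w : ℍ) :
    ‖(z:ℂ) - w‖^2 = (z.re - w.re)^2 + (z.im - w.im)^2 := by
  rw [Complex.sq_norm, Complex.normSq_apply]
  simp only [Complex.sub_re, Complex.sub_im, coe_re, coe_im]
  ring

private def dlt (x1 p y1 q z1 t : ℝ) : ℝ :=
  x1*((y1^2+q^2)-(z1^2+t^2)) - (x1^2+p^2)*(y1-z1) + (y1*(z1^2+t^2) - z1*(y1^2+q^2))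

private lemma key_I (x1 y1 z1 p q t U V : ℝ) (ht : 0 < t)
    (hU : U^2 = ((x1-z1)^2+(p-t)^2)*((x1-z1)^2+(p+t)^2))
    (hV : V^2 = ((z1-y1)^2+(t-q)^2)*((z1-y1)^2+(t+q)^2))
    (hK : U*V = 2*t^2*((x1-y1)^2+p^2+q^2) - ((x1-z1)^2+p^2+t^2)*((z1-y1)^2+t^2+q^2)) :
    dlt x1 p y1 q z1 t = 0 := by
  have h : (2*t*(dlt x1 p y1 q z1 t))^2 = 0 := by
    unfold dlt
    linear_combination (-(V^2)) * hU
      + (-(((x1-z1)^2+(p-t)^2)*((x1-z1)^2+(p+t)^2))) * hV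
      + (U*V + (2*t^2*((x1-y1)^2+p^2+q^2) - ((x1-z1)^2+p^2+t^2)*((z1-y1)^2+t^2+q^2))) * hK
  have h2 : 2*t*(dlt x1 p y1 q z1 t) = 0 := by
    exact pow_eq_zero_iff (two_ne_zero) |>.mp h
  have ht' : (2:ℝ)*t ≠ 0 := by positivity
  rcases mul_eq_zero.mp h2 with h3 | h3
  · exact absurd h3 ht'
  · exact h3

private lemma key_vert (x1 y1 z1 p q t : ℝ) (hD : dlt x1 p y1 q z1 t = 0) :
    (x1-z1)^2*(((z1-y1)^2+(t-q)^2)*((z1-y1)^2+(t+q)^2))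
      = (y1-z1)^2*(((x1-z1)^2+(p-t)^2)*((x1-z1)^2+(p+t)^2)) := by
  unfold dlt at hD
  linear_combination ((1)*x1^2*y1 + (-1)*x1^2*z1 + (1)*x1*y1^2 + (-4)*x1*y1*z1 + (3)*x1*z1^2 + (1)*x1*q^2 + (-1)*x1*t^2 + (-1)*y1^2*z1 + (3)*y1*z1^2 + (1)*y1*p^2 + (-1)*y1*t^2 + (-2)*z1^3 + (-1)*z1*p^2 + (-1)*z1*q^2 + (2)*z1*t^2) * hD

private lemma key_circ (x1 y1 z1 p q t c : ℝ) (hD : dlt x1 p y1 q z1 t = 0) :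
    ((x1-c)^2+p^2-((z1-c)^2+t^2))^2*(((z1-y1)^2+(t-q)^2)*((z1-y1)^2+(t+q)^2))
      = ((y1-c)^2+q^2-((z1-c)^2+t^2))^2*(((x1-z1)^2+(p-t)^2)*((x1-z1)^2+(p+t)^2)) := by
  unfold dlt at hD
  linear_combination ((4)*x1^2*y1^2*z1 + (-4)*x1^2*y1^2*c + (-4)*x1^2*y1*z1^2 + (-4)*x1^2*y1*t^2 + (4)*x1^2*y1*c^2 + (4)*x1^2*z1^2*c + (4)*x1^2*z1*q^2 + (-4)*x1^2*z1*c^2 + (-4)*x1^2*q^2*c + (4)*x1^2*t^2*c + (-4)*x1*y1^2*z1^2 + (-4)*x1*y1^2*t^2 + (4)*x1*y1^2*c^2 + (16)*x1*y1*z1^2*c + (-16)*x1*y1*z1*c^2 + (16)*x1*y1*t^2*c + (4)*x1*z1^4 + (-16)*x1*z1^3*c + (-4)*x1*z1^2*q^2 + (8)*x1*z1^2*t^2 + (12)*x1*z1^2*c^2 + (-16)*x1*z1*t^2*c + (-4)*x1*q^2*t^2 + (4)*x1*q^2*c^2 + (4)*x1*t^4 + (-4)*x1*t^2*c^2 + (4)*y1^2*z1^2*c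 + (4)*y1^2*z1*p^2 + (-4)*y1^2*z1*c^2 + (-4)*y1^2*p^2*c + (4)*y1^2*t^2*c + (4)*y1*z1^4 + (-16)*y1*z1^3*c + (-4)*y1*z1^2*p^2 + (8)*y1*z1^2*t^2 + (12)*y1*z1^2*c^2 + (-16)*y1*z1*t^2*c + (-4)*y1*p^2*t^2 + (4)*y1*p^2*c^2 + (4)*y1*t^4 + (-4)*y1*t^2*c^2 + (-4)*z1^5 + (12)*z1^4*c + (-8)*z1^3*t^2 + (-8)*z1^3*c^2 + (4)*z1^2*p^2*c + (4)*z1^2*q^2*c + (8)*z1^2*t^2*c + (4)*z1*p^2*q^2 + (-4)*z1*p^2*c^2 + (-4)*z1*q^2*c^2 + (-4)*z1*t^4 + (8)*z1*t^2*c^2 + (-4)*p^2*q^2*c + (4)*p^2*t^2*c + (4)*q^2*t^2*c + (-4)*t^4*c) * hD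

private lemma dlt_of_HBtw (P R Q : ℍ) (h : HBtw P R Q) :
    dlt P.re P.im Q.re Q.im R.re R.im = 0 := by
  have hp : (0:ℝ) < P.im := P.im_pos
  have hq : (0:ℝ) < Q.im := Q.im_pos
  have ht : (0:ℝ) < R.im := R.im_pos
  have hcosh := congrArg Real.cosh h
  rw [Real.cosh_add] at hcosh
  rw [UpperHalfPlane.cosh_dist', UpperHalfPlane.cosh_dist', UpperHalfPlane.cosh_dist',
    sinh_dist'', sinh_dist''] at hcosh
  set U := ‖(P:ℂ) - R‖ * ‖(P:ℂ) - (starRingEnd ℂ) R‖ with hUdef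
  set V := ‖(R:ℂ) - Q‖ * ‖(R:ℂ) - (starRingEnd ℂ) Q‖ with hVdef
  apply key_I P.re Q.re R.re P.im Q.im R.im U V ht (prod_abs_sq P R) (prod_abs_sq R Q)
  field_simp at hcosh
  have h2pq : (2 * P.im * Q.im) ≠ 0 := by positivity
  apply mul_right_cancel₀ h2pq
  linear_combination (2 * P.im * Q.im) * hcosh

private lemma dlt_of_cases (X Y W : ℍ) (h : HBtw X W Y ∨ HBtw W X Y ∨ HBtw X Y W) :
    dlt X.re X.im Y.re Y.im W.re W.im = 0 := by
  rcases h with h|h|h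
  · exact dlt_of_HBtw X W Y h
  · have := dlt_of_HBtw W X Y h
    unfold dlt at this ⊢
    linear_combination -this
  · have := dlt_of_HBtw X Y W h
    unfold dlt at this ⊢
    linear_combination -this

private def EL : HLine → ℍ → ℝ
  | .vertical a, z => |z.re - a| / z.im
  | .circle c r _, z => |(z.re - c)^2 + z.im^2 - r^2| / (2*r*z.im)

private lemma infDist_eq_of_bounds {S : Set ℍ} {z : ℍ} {d0 : ℝ} (hd0 : 0 ≤ d0)
    (hmem : ∃ w ∈ S, dist z w = d0) (hbd : ∀ w ∈ S, d0 ≤ dist z w) :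
    Metric.infDist z S = d0 := by
  obtain ⟨w0, hw0S, hw0⟩ := hmem
  refine le_antisymm (hw0 ▸ Metric.infDist_le_dist_of_mem hw0S) ?_
  by_contra hlt
  push_neg at hlt
  obtain ⟨w, hwS, hw⟩ := (Metric.infDist_lt_iff ⟨w0, hw0S⟩).mp hlt
  exact absurd hw (not_lt.mpr (hbd w hwS))

private lemma sinh_infDist_vert (a : ℝ) (z : ℍ) :
    Real.sinh (Metric.infDist z (HLine.carrier (.vertical a))) = |z.re - a| / z.im := by
  have hp : (0:ℝ) < z.im := z.im_pos
  set R : ℝ := Real.sqrt ((z.re - a)^2 + z.im^2) with hRdef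
  have hR2 : R^2 = (z.re - a)^2 + z.im^2 := Real.sq_sqrt (by positivity)
  have hR : 0 < R := Real.sqrt_pos.mpr (by positivity)
  set d0 : ℝ := Real.arsinh (|z.re - a| / z.im) with hd0def
  have hd0 : 0 ≤ d0 := Real.arsinh_nonneg_iff.mpr (by positivity)
  have hcosh0 : Real.cosh d0 = R / z.im := by
    apply eq_of_sq_eq' (Real.cosh_pos _).le (by positivity)
    rw [Real.cosh_sq', hd0def, Real.sinh_arsinh, div_pow, div_pow, sq_abs]
    field_simp
    linear_combination -hR2
  have hinf : Metric.infDist z (HLine.carrier (.vertical a)) = d0 := by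
    apply infDist_eq_of_bounds hd0
    · refine ⟨UpperHalfPlane.mk ⟨a, R⟩ hR, ?_, ?_⟩
      · show ((UpperHalfPlane.mk ⟨a, R⟩ hR : ℍ) : ℂ).re = a
        rw [UpperHalfPlane.coe_mk]
      · apply cosh_inj_nonneg dist_nonneg hd0
        rw [UpperHalfPlane.cosh_dist', hcosh0, UpperHalfPlane.mk_re, UpperHalfPlane.mk_im]
        show ((z.re - a) ^ 2 + z.im ^ 2 + R ^ 2) / (2 * z.im * R) = R / z.im
        rw [div_eq_div_iff (by positivity) (by positivity)]
        nlinarith [hR2]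
    · intro w hw
      have hwre : (w:ℂ).re = a := hw
      have hv : (0:ℝ) < w.im := w.im_pos
      have hc : Real.cosh d0 ≤ Real.cosh (dist z w) := by
        rw [hcosh0, UpperHalfPlane.cosh_dist']
        rw [div_le_div_iff₀ (by positivity) (by positivity)]
        have hwa : w.re = a := by rw [← hwre, UpperHalfPlane.coe_re]
        rw [hwa]
        nlinarith [sq_nonneg (R - w.im), hR2, hp, hv, mul_pos hp hv]
      have := Real.cosh_le_cosh.mp hc
      rwa [abs_of_nonneg hd0, abs_of_nonneg dist_nonneg] at this
  rw [hinf, hd0def, Real.sinh_arsinh]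

private lemma mem_circle_coords {c r : ℝ} (hr : 0 < r) {w : ℍ}
    (hw : ‖(w : ℂ) - (c:ℂ)‖ = r) : (w.re - c)^2 + w.im^2 = r^2 := by
  have := congrArg (·^2) hw
  simp only [Complex.sq_norm, Complex.normSq_apply, Complex.sub_re, Complex.sub_im,
    Complex.ofReal_re, Complex.ofReal_im, coe_re, coe_im] at this
  rw [← this]; ring

private lemma aux_cosh0 (u im r D : ℝ) (him : 0 < im) (hr : 0 < r) (hD : 0 ≤ D)
    (hD2 : D^2 = u^2 + 4*r^2*im^2) :
    Real.cosh (Real.arsinh (|u| / (2*r*im))) = D / (2*r*im) := by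
  apply eq_of_sq_eq' (Real.cosh_pos _).le (by positivity)
  rw [Real.cosh_sq', Real.sinh_arsinh, div_pow, sq_abs]
  field_simp
  linear_combination -hD2

private lemma aux_w0dist (e im r A B D : ℝ) (him : 0 < im) (hr : 0 < r) (hA : 0 < A)
    (hD : 0 < D) (hAe : A = e^2 + im^2 + r^2) (hBe : B = 2*r*e) (hD2 : D^2 = A^2 - B^2) :
    ((e - r*B/A)^2 + im^2 + (r*D/A)^2) * (2*r*im) = D * (2*im*(r*D/A)) := by
  have hA' : A ≠ 0 := hA.ne'
  field_simp
  linear_combination (r^2 - A) * hD2 - A^2 * hAe + A*B * hBe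

private lemma aux_memw0 (r A B D : ℝ) (hA : 0 < A) (hD2 : D^2 = A^2 - B^2) :
    (r*B/A) * (r*B/A) + (r*D/A) * (r*D/A) = r^2 := by
  have hA' : A ≠ 0 := hA.ne'
  field_simp
  linear_combination r^2 * hD2

private lemma aux_bound (e im r A B D w1 v : ℝ) (him : 0 < im) (hr : 0 < r)
    (hA : A = e^2 + im^2 + r^2) (hB : B = 2*r*e) (hD2 : D^2 = A^2 - B^2) (hD : 0 ≤ D)
    (hv : 0 < v) (hw : w1^2 + v^2 = r^2) :
    D / (2*r*im) ≤ ((e - w1)^2 + im^2 + v^2) / (2*im*v) := by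
  have hA0 : 0 < A := by nlinarith [sq_nonneg e, sq_nonneg im]
  rw [div_le_div_iff₀ (by positivity) (by positivity)]
  have hAB1 : 0 ≤ A - B := by nlinarith [sq_nonneg D]
  have hAB2 : 0 ≤ A + B := by nlinarith [sq_nonneg D]
  have hw1 : 0 ≤ r - w1 := by nlinarith [sq_nonneg v]
  have hw2 : 0 ≤ r + w1 := by nlinarith [sq_nonneg v]
  have hpos : 0 ≤ r*A - B*w1 := by nlinarith [mul_nonneg hAB1 hw2, mul_nonneg hAB2 hw1]
  have hkey : (r*A - B*w1)^2 - (D*v)^2 = (A*w1 - B*r)^2 := by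
    rw [hA, hB] at hD2 ⊢
    nlinarith [hw, hD2]
  have hfin : D*v ≤ r*A - B*w1 := by
    nlinarith [hkey, hpos, mul_nonneg hD (le_of_lt hv), sq_nonneg (A*w1 - B*r)]
  calc D * (2*im*v) = (D*v) * (2*im) := by ring
  _ ≤ (r*A - B*w1) * (2*im) := by nlinarith [hfin, him]
  _ = ((e - w1)^2 + im^2 + v^2) * (2*r*im) := by rw [hA, hB]; linear_combination (-(2*im*r)) * hw

private lemma sinh_infDist_circ (c r : ℝ) (hr : 0 < r) (z : ℍ) :
    Real.sinh (Metric.infDist z (HLine.carrier (.circle c r hr))) =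
      |(z.re - c)^2 + z.im^2 - r^2| / (2*r*z.im) := by
  have hp : (0:ℝ) < z.im := z.im_pos
  obtain ⟨A, hAe⟩ : ∃ A : ℝ, A = (z.re - c)^2 + z.im^2 + r^2 := ⟨_, rfl⟩
  obtain ⟨B, hBe⟩ : ∃ B : ℝ, B = 2*r*(z.re - c) := ⟨_, rfl⟩
  obtain ⟨D, hDe⟩ : ∃ D : ℝ, D = Real.sqrt (((z.re - c)^2 + z.im^2 - r^2)^2 + 4*r^2*z.im^2) :=
    ⟨_, rfl⟩
  have hD2 : D^2 = ((z.re - c)^2 + z.im^2 - r^2)^2 + 4*r^2*z.im^2 := by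
    rw [hDe]; exact Real.sq_sqrt (by positivity)
  have hD2' : D^2 = A^2 - B^2 := by rw [hD2, hAe, hBe]; ring
  have hA : 0 < A := by rw [hAe]; positivity
  have hD : 0 < D := by rw [hDe]; exact Real.sqrt_pos.mpr (by positivity)
  have him0 : (0:ℝ) < r*D/A := by positivity
  have hd0 : 0 ≤ Real.arsinh (|(z.re - c)^2 + z.im^2 - r^2| / (2*r*z.im)) :=
    Real.arsinh_nonneg_iff.mpr (by positivity)
  have hcosh0 := aux_cosh0 ((z.re - c)^2 + z.im^2 - r^2) z.im r D hp hr hD.le hD2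
  have hinf : Metric.infDist z (HLine.carrier (.circle c r hr))
      = Real.arsinh (|(z.re - c)^2 + z.im^2 - r^2| / (2*r*z.im)) := by
    apply infDist_eq_of_bounds hd0
    · refine ⟨UpperHalfPlane.mk ⟨c + r*B/A, r*D/A⟩ him0, ?_, ?_⟩
      · show ‖((UpperHalfPlane.mk ⟨c + r*B/A, r*D/A⟩ him0 : ℍ) : ℂ) - (c:ℂ)‖ = r
        apply eq_of_sq_eq' (norm_nonneg _) hr.le
        rw [Complex.sq_norm, Complex.normSq_apply, UpperHalfPlane.coe_mk]
        simp only [Complex.sub_re, Complex.sub_im, Complex.ofReal_re, Complex.ofReal_im]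
        have := aux_memw0 r A B D hA hD2'
        linear_combination this
      · apply cosh_inj_nonneg dist_nonneg hd0
        rw [UpperHalfPlane.cosh_dist', hcosh0, UpperHalfPlane.mk_re, UpperHalfPlane.mk_im]
        rw [div_eq_div_iff (by positivity) (by positivity)]
        change ((z.re - (c + r*B/A))^2 + z.im^2 + (r*D/A)^2) * (2*r*z.im) = D * (2*z.im*(r*D/A))
        have := aux_w0dist (z.re - c) z.im r A B D hp hr hA hD hAe hBe hD2'
        linear_combination this
    · intro w hw
      have hwc : (w.re - c)^2 + w.im^2 = r^2 := mem_circle_coords hr hw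
      have hv : (0:ℝ) < w.im := w.im_pos
      have hc : Real.cosh (Real.arsinh (|(z.re - c)^2 + z.im^2 - r^2| / (2*r*z.im)))
          ≤ Real.cosh (dist z w) := by
        rw [hcosh0, UpperHalfPlane.cosh_dist']
        have := aux_bound (z.re - c) z.im r A B D (w.re - c) w.im hp hr hAe hBe hD2' hD.le
          hv hwc
        calc D / (2*r*z.im) ≤ ((z.re - c - (w.re - c))^2 + z.im^2 + w.im^2) / (2*z.im*w.im) :=
              this
        _ = ((z.re - w.re)^2 + z.im^2 + w.im^2) / (2*z.im*w.im) := by ring_nf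
      have := Real.cosh_le_cosh.mp hc
      rwa [abs_of_nonneg hd0, abs_of_nonneg dist_nonneg] at this
  rw [hinf, Real.sinh_arsinh]

private lemma sinh_infDist (ℓ : HLine) (z : ℍ) :
    Real.sinh (Metric.infDist z ℓ.carrier) = EL ℓ z := by
  cases ℓ with
  | vertical a => exact sinh_infDist_vert a z
  | circle c r hr => exact sinh_infDist_circ c r hr z

private lemma sinh_dist_sq (z w : ℍ) : Real.sinh (dist z w)^2 =
    (((z.re - w.re)^2 + (z.im - w.im)^2) * ((z.re - w.re)^2 + (z.im + w.im)^2))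
      / (2 * z.im * w.im)^2 := by
  rw [sinh_dist'', div_pow, prod_abs_sq]

private lemma sinh_dist_nonneg (z w : ℍ) : 0 ≤ Real.sinh (dist z w) :=
  Real.sinh_nonneg_iff.mpr dist_nonneg

private lemma EL_nonneg (ℓ : HLine) (z : ℍ) : 0 ≤ EL ℓ z := by
  cases ℓ with
  | vertical a =>
    show 0 ≤ |z.re - a| / z.im
    positivity
  | circle c r hr =>
    show 0 ≤ |(z.re - c)^2 + z.im^2 - r^2| / (2*r*z.im)
    have := z.im_pos
    positivity

private lemma moment_transfer (ℓ : HLine) (X Y Z : ℍ) (hZ : Z ∈ ℓ.carrier)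
    (hD : dlt X.re X.im Y.re Y.im Z.re Z.im = 0) :
    EL ℓ X * Real.sinh (dist Y Z) = EL ℓ Y * Real.sinh (dist X Z) := by
  have hp : (0:ℝ) < X.im := X.im_pos
  have hq : (0:ℝ) < Y.im := Y.im_pos
  have ht : (0:ℝ) < Z.im := Z.im_pos
  apply eq_of_sq_eq'
    (mul_nonneg (EL_nonneg ℓ X) (sinh_dist_nonneg Y Z))
    (mul_nonneg (EL_nonneg ℓ Y) (sinh_dist_nonneg X Z))
  rw [mul_pow, mul_pow, sinh_dist_sq, sinh_dist_sq]
  cases ℓ with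
  | vertical a =>
    have hZa : Z.re = a := by rw [← UpperHalfPlane.coe_re]; exact hZ
    show (|X.re - a| / X.im)^2 * _ = (|Y.re - a| / Y.im)^2 * _
    rw [div_pow, div_pow, sq_abs, sq_abs, ← hZa]
    rw [div_mul_div_comm, div_mul_div_comm, div_eq_div_iff (by positivity) (by positivity)]
    have := key_vert X.re Y.re Z.re X.im Y.im Z.im hD
    linear_combination (4*X.im^2*Y.im^2*Z.im^2) * this
  | circle c r hr =>
    have hZc : (Z.re - c)^2 + Z.im^2 = r^2 := mem_circle_coords hr hZ
    show (|(X.re - c)^2 + X.im^2 - r^2| / (2*r*X.im))^2 * _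
      = (|(Y.re - c)^2 + Y.im^2 - r^2| / (2*r*Y.im))^2 * _
    rw [div_pow, div_pow, sq_abs, sq_abs, ← hZc]
    rw [div_mul_div_comm, div_mul_div_comm, div_eq_div_iff (by positivity) (by positivity)]
    have := key_circ X.re Y.re Z.re X.im Y.im Z.im c hD
    linear_combination (16*r^2*X.im^2*Y.im^2*Z.im^2) * this

/-- The balancing point exists along a unit-speed parametrized geodesic. -/
private lemma balance_core {S : Set ℍ} (γ : ℝ → ℍ)
    (hd : ∀ s u, dist (γ s) (γ u) = |s - u|) (hmem : ∀ s, γ s ∈ S)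
    {x y : ℝ} (hx : 0 < x) (hy : 0 < y) (s0 u0 : ℝ) (hle : s0 ≤ u0) :
    ∃ Z ∈ S, HBtw (γ s0) Z (γ u0) ∧
      x * Real.sinh (dist (γ s0) Z) = y * Real.sinh (dist (γ u0) Z) := by
  set f : ℝ → ℝ := fun v => x * Real.sinh (v - s0) - y * Real.sinh (u0 - v) with hf
  have hcont : ContinuousOn f (Set.Icc s0 u0) := by
    apply Continuous.continuousOn
    fun_prop
  have hf0 : f s0 ≤ 0 := by
    simp only [hf, sub_self, Real.sinh_zero, mul_zero, zero_sub, neg_nonpos]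
    exact mul_nonneg hy.le (Real.sinh_nonneg_iff.mpr (by linarith))
  have hf1 : 0 ≤ f u0 := by
    simp only [hf, sub_self, Real.sinh_zero, mul_zero, sub_zero]
    exact mul_nonneg hx.le (Real.sinh_nonneg_iff.mpr (by linarith))
  obtain ⟨v, hv, hfv⟩ := intermediate_value_Icc hle hcont (Set.mem_Icc.mpr ⟨hf0, hf1⟩)
  refine ⟨γ v, hmem v, ?_, ?_⟩
  · show dist (γ s0) (γ v) + dist (γ v) (γ u0) = dist (γ s0) (γ u0)
    rw [hd, hd, hd, abs_of_nonpos (by linarith [hv.1, hv.2] : s0 - v ≤ 0),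
      abs_of_nonpos (by linarith [hv.1, hv.2] : v - u0 ≤ 0),
      abs_of_nonpos (by linarith : s0 - u0 ≤ 0)]
    ring
  · rw [hd, hd, abs_of_nonpos (show s0 - v ≤ 0 by linarith [hv.1]),
      abs_of_nonneg (show (0:ℝ) ≤ u0 - v by linarith [hv.2])]
    have hfv' : x * Real.sinh (v - s0) - y * Real.sinh (u0 - v) = 0 := hfv
    rw [show -(s0 - v) = v - s0 by ring]
    linarith

private def vpt (a : ℝ) (s : ℝ) : ℍ := UpperHalfPlane.mk ⟨a, Real.exp s⟩ (by
  simp only [Complex.ofReal_im]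
  exact Real.exp_pos s)

private lemma vpt_re (a s : ℝ) : (vpt a s).re = a := rfl
private lemma vpt_im (a s : ℝ) : (vpt a s).im = Real.exp s := rfl

private lemma vpt_dist (a : ℝ) (s u : ℝ) : dist (vpt a s) (vpt a u) = |s - u| := by
  rw [UpperHalfPlane.dist_of_re_eq (by rw [vpt_re, vpt_re]), vpt_im, vpt_im,
    Real.log_exp, Real.log_exp, Real.dist_eq]

private lemma vpt_mem (a s : ℝ) : vpt a s ∈ HLine.carrier (.vertical a) := by
  show ((vpt a s : ℍ) : ℂ).re = a
  rfl

private lemma vpt_covers (a : ℝ) (X : ℍ) (hX : X ∈ HLine.carrier (.vertical a)) :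
    vpt a (Real.log X.im) = X := by
  have hre : ((X : ℍ) : ℂ).re = a := hX
  apply UpperHalfPlane.ext' (by rw [vpt_re, ← UpperHalfPlane.coe_re, hre])
  rw [vpt_im, Real.exp_log X.im_pos]

private def cpt (c r : ℝ) (hr : 0 < r) (s : ℝ) : ℍ :=
  UpperHalfPlane.mk ⟨c + r * Real.tanh s, r / Real.cosh s⟩ (by
    have := Real.cosh_pos s
    simp only [Complex.ofReal_im]
    positivity)

private lemma cpt_re (c r : ℝ) (hr : 0 < r) (s : ℝ) :
    (cpt c r hr s).re = c + r * Real.tanh s := rfl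
private lemma cpt_im (c r : ℝ) (hr : 0 < r) (s : ℝ) :
    (cpt c r hr s).im = r / Real.cosh s := rfl

private lemma cpt_dist (c r : ℝ) (hr : 0 < r) (s u : ℝ) :
    dist (cpt c r hr s) (cpt c r hr u) = |s - u| := by
  apply cosh_inj_nonneg dist_nonneg (abs_nonneg _)
  rw [Real.cosh_abs, UpperHalfPlane.cosh_dist', cpt_re, cpt_re, cpt_im, cpt_im]
  have hcs := Real.cosh_pos s
  have hcu := Real.cosh_pos u
  have h1 : Real.cosh s ^ 2 = 1 + Real.sinh s ^ 2 := Real.cosh_sq' s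
  have h2 : Real.cosh u ^ 2 = 1 + Real.sinh u ^ 2 := Real.cosh_sq' u
  rw [Real.cosh_sub, Real.tanh_eq_sinh_div_cosh, Real.tanh_eq_sinh_div_cosh]
  rw [div_eq_iff (by positivity)]
  field_simp
  ring_nf
  linear_combination (-(r^2*Real.cosh u^2))*h1 + (-(r^2*Real.cosh s^2))*h2

private lemma cpt_mem (c r : ℝ) (hr : 0 < r) (s : ℝ) :
    cpt c r hr s ∈ HLine.carrier (.circle c r hr) := by
  show ‖((cpt c r hr s : ℍ) : ℂ) - (c:ℂ)‖ = r
  apply eq_of_sq_eq' (norm_nonneg _) hr.le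
  rw [Complex.sq_norm, Complex.normSq_apply]
  simp only [Complex.sub_re, Complex.sub_im, Complex.ofReal_re, Complex.ofReal_im]
  have hre : (((cpt c r hr s : ℍ) : ℂ)).re = c + r * Real.tanh s := rfl
  have him : (((cpt c r hr s : ℍ) : ℂ)).im = r / Real.cosh s := rfl
  rw [hre, him]
  have hcs := (Real.cosh_pos s).ne'
  have h1 : Real.cosh s ^ 2 = 1 + Real.sinh s ^ 2 := Real.cosh_sq' s
  rw [Real.tanh_eq_sinh_div_cosh]
  field_simp
  linear_combination (-(r^2)) * h1

private lemma cpt_covers (c r : ℝ) (hr : 0 < r) (X : ℍ) (hX : X ∈ HLine.carrier (.circle c r hr)) :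
    cpt c r hr (Real.arsinh ((X.re - c) / X.im)) = X := by
  have hXc : (X.re - c)^2 + X.im^2 = r^2 := mem_circle_coords hr hX
  have hp : (0:ℝ) < X.im := X.im_pos
  set s := Real.arsinh ((X.re - c) / X.im) with hs
  have hsinh : Real.sinh s = (X.re - c) / X.im := Real.sinh_arsinh _
  have hcosh : Real.cosh s = r / X.im := by
    apply eq_of_sq_eq' (Real.cosh_pos s).le (by positivity)
    rw [Real.cosh_sq', hsinh, div_pow, div_pow]
    field_simp
    linear_combination hXc
  apply UpperHalfPlane.ext'
  · rw [cpt_re, Real.tanh_eq_sinh_div_cosh, hsinh, hcosh]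
    field_simp
    ring
  · rw [cpt_im, hcosh]
    field_simp

private lemma exists_balance_of_mem (ℓ : HLine) (X Y : ℍ) (hX : X ∈ ℓ.carrier)
    (hY : Y ∈ ℓ.carrier) {x y : ℝ} (hx : 0 < x) (hy : 0 < y) :
    ∃ Z ∈ ℓ.carrier, HBtw X Z Y ∧
      x * Real.sinh (dist X Z) = y * Real.sinh (dist Y Z) := by
  have main : ∀ (γ : ℝ → ℍ), (∀ s u, dist (γ s) (γ u) = |s - u|) → (∀ s, γ s ∈ ℓ.carrier) →
      ∀ s0 u0, γ s0 = X → γ u0 = Y →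
      ∃ Z ∈ ℓ.carrier, HBtw X Z Y ∧
        x * Real.sinh (dist X Z) = y * Real.sinh (dist Y Z) := by
    intro γ hd hmem s0 u0 hs0 hu0
    rcases le_total s0 u0 with hle | hle
    · obtain ⟨Z, hZ, hbtw, hmom⟩ := balance_core γ hd hmem hx hy s0 u0 hle
      rw [hs0, hu0] at hbtw hmom
      exact ⟨Z, hZ, hbtw, hmom⟩
    · obtain ⟨Z, hZ, hbtw, hmom⟩ := balance_core γ hd hmem hy hx u0 s0 hle
      rw [hs0, hu0] at hbtw hmom
      refine ⟨Z, hZ, ?_, ?_⟩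
      · show dist X Z + dist Z Y = dist X Y
        have : dist Y Z + dist Z X = dist Y X := hbtw
        rw [dist_comm X Z, dist_comm Z Y, dist_comm X Y]
        linarith
      · linarith
  cases ℓ with
  | vertical a =>
    exact main (vpt a) (vpt_dist a) (vpt_mem a) (Real.log X.im) (Real.log Y.im)
      (vpt_covers a X hX) (vpt_covers a Y hY)
  | circle c r hr =>
    exact main (cpt c r hr) (cpt_dist c r hr) (cpt_mem c r hr)
      (Real.arsinh ((X.re - c) / X.im)) (Real.arsinh ((Y.re - c) / Y.im))
      (cpt_covers c r hr X hX) (cpt_covers c r hr Y hY)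

private lemma mem_of_EL_eq_zero (ℓ : HLine) (X : ℍ) (h : EL ℓ X = 0) : X ∈ ℓ.carrier := by
  cases ℓ with
  | vertical a =>
    have h' : |X.re - a| / X.im = 0 := h
    have him : X.im ≠ 0 := X.im_pos.ne'
    rcases div_eq_zero_iff.mp h' with h0 | h0
    · show ((X:ℍ):ℂ).re = a
      rw [UpperHalfPlane.coe_re]
      have := abs_eq_zero.mp h0
      linarith
    · exact absurd h0 him
  | circle c r hr =>
    have h' : |(X.re - c)^2 + X.im^2 - r^2| / (2*r*X.im) = 0 := h
    have hden : (2*r*X.im) ≠ 0 := by have := X.im_pos; positivity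
    have h0 : (X.re - c)^2 + X.im^2 - r^2 = 0 := by
      rcases div_eq_zero_iff.mp h' with h0 | h0
      · exact abs_eq_zero.mp h0
      · exact absurd h0 hden
    show ‖((X:ℍ):ℂ) - (c:ℂ)‖ = r
    apply eq_of_sq_eq' (norm_nonneg _) hr.le
    rw [Complex.sq_norm, Complex.normSq_apply]
    simp only [Complex.sub_re, Complex.sub_im, Complex.ofReal_re, Complex.ofReal_im,
      UpperHalfPlane.coe_re, UpperHalfPlane.coe_im]
    linear_combination h0

end AuxLemmas

/-- Proposition 3.2: two point-masses `(X,x)`, `(Y,y)` have equal unsigned moments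
with respect to a line `m` that meets the line `XY` if and only if `m` contains one
of their (internal or external) centroids, i.e. a point `Z` on the line `XY` with
`x·sinh d(X,Z) = y·sinh d(Y,Z)`. -/
theorem equal_moments_iff_line_through_centroid (X Y : ℍ) (hXY : X ≠ Y)
    (x y : ℝ) (hx : 0 < x) (hy : 0 < y) (ℓ : HLine)
    (hmeet : ∃ W : ℍ, W ∈ ℓ.carrier ∧ (HBtw X W Y ∨ HBtw W X Y ∨ HBtw X Y W)) :
    x * Real.sinh (Metric.infDist X ℓ.carrier)
      = y * Real.sinh (Metric.infDist Y ℓ.carrier) ↔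
    ∃ Z : ℍ, Z ∈ ℓ.carrier ∧ (HBtw X Z Y ∨ HBtw Z X Y ∨ HBtw X Y Z) ∧
      x * Real.sinh (dist X Z) = y * Real.sinh (dist Y Z) := by
  obtain ⟨W, hWmem, hWbtw⟩ := hmeet
  rw [sinh_infDist, sinh_infDist]
  constructor
  · intro h
    rcases eq_or_ne (EL ℓ X) 0 with hEX | hEX
    · have hEY : EL ℓ Y = 0 := by
        have h0 : y * EL ℓ Y = 0 := by rw [← h, hEX, mul_zero]
        rcases mul_eq_zero.mp h0 with h' | h'
        · exact absurd h' hy.ne'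
        · exact h'
      obtain ⟨Z, hZ, hbtw, hmom⟩ := exists_balance_of_mem ℓ X Y
        (mem_of_EL_eq_zero ℓ X hEX) (mem_of_EL_eq_zero ℓ Y hEY) hx hy
      exact ⟨Z, hZ, Or.inl hbtw, hmom⟩
    · have hD := dlt_of_cases X Y W hWbtw
      have htr := moment_transfer ℓ X Y W hWmem hD
      have hEY : EL ℓ Y ≠ 0 := by
        intro h0
        rw [h0, mul_zero] at h
        rcases mul_eq_zero.mp h with h' | h'
        · exact absurd h' hx.ne'
        · exact hEX h'
      refine ⟨W, hWmem, hWbtw, ?_⟩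
      have key : (x * Real.sinh (dist X W)) * EL ℓ Y
          = (y * Real.sinh (dist Y W)) * EL ℓ Y := by
        calc (x * Real.sinh (dist X W)) * EL ℓ Y
            = x * (EL ℓ Y * Real.sinh (dist X W)) := by ring
          _ = x * (EL ℓ X * Real.sinh (dist Y W)) := by rw [← htr]
          _ = (x * EL ℓ X) * Real.sinh (dist Y W) := by ring
          _ = (y * EL ℓ Y) * Real.sinh (dist Y W) := by rw [h]
          _ = (y * Real.sinh (dist Y W)) * EL ℓ Y := by ring
      exact mul_right_cancel₀ hEY key
  · rintro ⟨Z, hZmem, hZbtw, hmom⟩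
    have hD := dlt_of_cases X Y Z hZbtw
    have htr := moment_transfer ℓ X Y Z hZmem hD
    have hYZ : Y ≠ Z := by
      intro hYZ
      rw [← hYZ, dist_self, Real.sinh_zero, mul_zero] at hmom
      rcases mul_eq_zero.mp hmom with h' | h'
      · exact absurd h' hx.ne'
      · have : dist X Y = 0 := by
          have := Real.sinh_eq_zero.mp h'
          rw [hYZ] at this ⊢
          exact this
        exact hXY (dist_eq_zero.mp this)
    have hsYZ : 0 < Real.sinh (dist Y Z) :=
      Real.sinh_pos_iff.mpr (dist_pos.mpr hYZ)
    have key : (x * EL ℓ X) * Real.sinh (dist Y Z)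
        = (y * EL ℓ Y) * Real.sinh (dist Y Z) := by
      calc (x * EL ℓ X) * Real.sinh (dist Y Z)
          = x * (EL ℓ X * Real.sinh (dist Y Z)) := by ring
        _ = x * (EL ℓ Y * Real.sinh (dist X Z)) := by rw [htr]
        _ = (x * Real.sinh (dist X Z)) * EL ℓ Y := by ring
        _ = (y * Real.sinh (dist Y Z)) * EL ℓ Y := by rw [hmom]
        _ = (y * EL ℓ Y) * Real.sinh (dist Y Z) := by ring
    exact mul_right_cancel₀ hsYZ.ne' key
end
end

section
/- Let L be a lamina (compact region of positive finite area with continuous nonnegative density λ, of positive total mass) in the hyperbolic plane, and let m1, m2, m3 be three lines through a common point P. If the moment of L with respect to m1 and with respect to m2 are both zero, then the moment of L with respect to m3 is also zero. -/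
open Real UpperHalfPlane

set_option maxHeartbeats 1000000

noncomputable section

open MeasureTheory

instance : MeasurableSpace ℍ := borel ℍ

/-- Hyperbolic area measure on the upper half-plane: `dA = dx dy / y²`. -/
def hypArea : Measure ℍ :=
  Measure.comap (fun z : ℍ => (z : ℂ))
    (volume.withDensity fun w : ℂ => ENNReal.ofReal ((w.im ^ 2)⁻¹))

/-! ### Auxiliary material -/

instance : BorelSpace ℍ := ⟨rfl⟩

namespace LaminaAux

lemma real_sign_mul_abs (x : ℝ) : Real.sign x * |x| = x := by
  rcases lt_trichotomy x 0 with h | h | h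
  · rw [Real.sign_of_neg h, abs_of_neg h]; ring
  · simp [h]
  · rw [Real.sign_of_pos h, abs_of_pos h]; ring

/-- cosh of the hyperbolic distance in coordinates. -/
lemma cosh_dist_coords (z w : ℍ) :
    Real.cosh (dist z w) =
      ((z.re - w.re) ^ 2 + (z.im - w.im) ^ 2) / (2 * z.im * w.im) + 1 := by
  rw [UpperHalfPlane.cosh_dist, Complex.dist_eq_re_im,
    Real.sq_sqrt (by positivity)]
  rw [UpperHalfPlane.coe_re, UpperHalfPlane.coe_im, UpperHalfPlane.coe_re,
    UpperHalfPlane.coe_im]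
  ring

/-- If a point of `S` realizes the minimum of `cosh ∘ dist`, it computes `infDist`. -/
lemma infDist_eq_of_min {z w0 : ℍ} {S : Set ℍ} (hw0 : w0 ∈ S)
    (hmin : ∀ w ∈ S, Real.cosh (dist z w0) ≤ Real.cosh (dist z w)) :
    Metric.infDist z S = dist z w0 := by
  refine le_antisymm (Metric.infDist_le_dist_of_mem hw0) (le_of_not_gt fun h => ?_)
  obtain ⟨w, hwS, hlt⟩ := (Metric.infDist_lt_iff ⟨w0, hw0⟩).1 h
  have h2 := hmin w hwS
  rw [Real.cosh_le_cosh, abs_of_nonneg dist_nonneg, abs_of_nonneg dist_nonneg] at h2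
  exact hlt.not_ge h2

lemma sinh_eq_sqrt {d V : ℝ} (hd : 0 ≤ d) (h : Real.cosh d = V) :
    Real.sinh d = Real.sqrt (V ^ 2 - 1) := by
  have hV : V ^ 2 - 1 = Real.sinh d ^ 2 := by rw [← h, Real.cosh_sq]; ring
  rw [hV, Real.sqrt_sq (Real.sinh_nonneg_iff.2 hd)]

lemma mem_circle_coords {c r : ℝ} {hr : 0 < r} {w : ℍ}
    (hw : w ∈ (HLine.circle c r hr).carrier) :
    (w.re - c) ^ 2 + w.im ^ 2 = r ^ 2 := by
  have h1 : ‖(w : ℂ) - (c : ℂ)‖ = r := hw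
  have h2 := congrArg (· ^ 2) h1
  simp only [Complex.sq_norm, Complex.normSq_apply, Complex.sub_re, Complex.sub_im,
    Complex.ofReal_re, Complex.ofReal_im] at h2
  rw [UpperHalfPlane.coe_re, UpperHalfPlane.coe_im] at h2
  nlinarith [h2]

/-- Explicit sinh of the distance to a vertical line. -/
lemma sinh_infDist_vertical (a : ℝ) (z : ℍ) :
    Real.sinh (Metric.infDist z (HLine.vertical a).carrier) = |z.re - a| / z.im := by
  set x := z.re with hx
  set y := z.im with hy
  have hy0 : 0 < y := z.im_pos
  set ρ : ℝ := Real.sqrt ((x - a) ^ 2 + y ^ 2) with hρ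
  have hρsq : ρ ^ 2 = (x - a) ^ 2 + y ^ 2 := Real.sq_sqrt (by positivity)
  have hρ0 : 0 < ρ := by
    rw [hρ]; apply Real.sqrt_pos.2; positivity
  set w0 : ℍ := ⟨⟨a, ρ⟩, hρ0⟩ with hw0def
  have hw0re : w0.re = a := rfl
  have hw0im : w0.im = ρ := rfl
  have hw0mem : w0 ∈ (HLine.vertical a).carrier := rfl
  have hcosh0 : Real.cosh (dist z w0) = ρ / y := by
    rw [cosh_dist_coords, hw0re, hw0im, ← hx, ← hy]
    field_simp
    nlinarith [hρsq]
  have hmin : ∀ w ∈ (HLine.vertical a).carrier,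
      Real.cosh (dist z w0) ≤ Real.cosh (dist z w) := by
    intro w hw
    have hwre : w.re = a := hw
    have hwim : 0 < w.im := w.im_pos
    rw [hcosh0, cosh_dist_coords, hwre, ← hx, ← hy]
    rw [← sub_nonneg]
    have hid : ((x - a) ^ 2 + (y - w.im) ^ 2) / (2 * y * w.im) + 1 - ρ / y =
        ((x - a) ^ 2 + (y - w.im) ^ 2 + 2 * y * w.im - 2 * w.im * ρ) /
          (2 * y * w.im) := by
      field_simp
    rw [hid]
    apply div_nonneg _ (by positivity)
    nlinarith [sq_nonneg (ρ - w.im), hρsq]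
  rw [infDist_eq_of_min hw0mem hmin, sinh_eq_sqrt dist_nonneg hcosh0]
  have h1 : (ρ / y) ^ 2 - 1 = ((x - a) / y) ^ 2 := by
    field_simp
    nlinarith [hρsq]
  rw [h1, Real.sqrt_sq_eq_abs, abs_div, abs_of_pos hy0]

/-- Explicit sinh of the distance to a semicircular line. -/
lemma sinh_infDist_circle (c r : ℝ) (hr : 0 < r) (z : ℍ) :
    Real.sinh (Metric.infDist z (HLine.circle c r hr).carrier) =
      |(z.re - c) ^ 2 + z.im ^ 2 - r ^ 2| / (2 * r * z.im) := by
  set x := z.re with hx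
  set y := z.im with hy
  have hy0 : 0 < y := z.im_pos
  set u : ℝ := x - c with hu
  set S : ℝ := u ^ 2 + y ^ 2 + r ^ 2 with hS
  have hS0 : 0 < S := by positivity
  have hTsq0 : 0 < S ^ 2 - 4 * u ^ 2 * r ^ 2 := by nlinarith [sq_nonneg (u^2 + y^2 - r^2), sq_nonneg u, sq_nonneg y, mul_pos hy0 hr]
  set T : ℝ := Real.sqrt (S ^ 2 - 4 * u ^ 2 * r ^ 2) with hT
  have hTsq : T ^ 2 = S ^ 2 - 4 * u ^ 2 * r ^ 2 := Real.sq_sqrt hTsq0.le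
  have hT0 : 0 < T := Real.sqrt_pos.2 hTsq0
  set p : ℝ := 2 * u * r ^ 2 / S with hp
  set q : ℝ := r * T / S with hq
  have hq0 : 0 < q := by positivity
  have hpq : p ^ 2 + q ^ 2 = r ^ 2 := by
    rw [hp, hq]
    field_simp
    nlinarith [hTsq]
  set w0 : ℍ := ⟨⟨c + p, q⟩, hq0⟩ with hw0def
  have hw0re : w0.re = c + p := rfl
  have hw0im : w0.im = q := rfl
  have hw0mem : w0 ∈ (HLine.circle c r hr).carrier := by
    show ‖(w0 : ℂ) - (c : ℂ)‖ = r
    have : (w0 : ℂ) - (c : ℂ) = ⟨p, q⟩ := by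
      apply Complex.ext <;> simp [hw0def, UpperHalfPlane.coe]
    rw [this, Complex.norm_def, Complex.normSq_mk]
    rw [show p * p + q * q = r ^ 2 by nlinarith [hpq], Real.sqrt_sq hr.le]
  have hSp : S - 2 * u * p = T ^ 2 / S := by
    rw [hp]; field_simp; linear_combination -hTsq
  have hcosh0 : Real.cosh (dist z w0) = T / (2 * r * y) := by
    rw [cosh_dist_coords, hw0re, hw0im, ← hx, ← hy]
    have hxc : x - (c + p) = u - p := by rw [hu]; ring
    rw [hxc]
    rw [div_add' _ _ _ (by positivity)]
    have hN : (u - p) ^ 2 + (y - q) ^ 2 + 2 * y * q = S - 2 * u * p := by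
      rw [hS]; linear_combination hpq
    rw [show (u - p) ^ 2 + (y - q) ^ 2 + 1 * (2 * y * q) = S - 2 * u * p from by
      rw [hS]; linear_combination hpq]
    rw [hSp, hq, div_eq_div_iff (by positivity) (by positivity)]
    field_simp
  have hmin : ∀ w ∈ (HLine.circle c r hr).carrier,
      Real.cosh (dist z w0) ≤ Real.cosh (dist z w) := by
    intro w hw
    have hwim : 0 < w.im := w.im_pos
    have hwc := mem_circle_coords hw
    set pw : ℝ := w.re - c with hpw
    set qw : ℝ := w.im with hqw
    have hkey : T * qw ≤ r * (S - 2 * u * pw) := by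
      have hpos : 0 < r * (S - 2 * u * pw) := by
        have : 2 * u * pw ≤ u ^ 2 + pw ^ 2 := by nlinarith [sq_nonneg (u - pw)]
        have hpw2 : pw ^ 2 ≤ r ^ 2 := by nlinarith [sq_nonneg qw, hwc]
        apply mul_pos hr
        nlinarith [hy0]
      have hsq : (T * qw) ^ 2 ≤ (r * (S - 2 * u * pw)) ^ 2 := by
        have hqw2 : qw ^ 2 = r ^ 2 - pw ^ 2 := by nlinarith [hwc]
        rw [mul_pow, hTsq, hqw2]
        nlinarith [sq_nonneg (pw * S - 2 * u * r ^ 2)]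
      have := Real.sqrt_le_sqrt hsq
      rwa [Real.sqrt_sq (by positivity), Real.sqrt_sq hpos.le] at this
    rw [hcosh0, cosh_dist_coords, ← hx, ← hy]
    rw [← sub_nonneg]
    have hid : ((x - w.re) ^ 2 + (y - qw) ^ 2) / (2 * y * qw) + 1 - T / (2 * r * y) =
        (r * ((x - w.re) ^ 2 + (y - qw) ^ 2 + 2 * y * qw) - T * qw) /
          (2 * r * y * qw) := by
      field_simp
    rw [hid]
    apply div_nonneg _ (by positivity)
    have hexp : (x - w.re) ^ 2 + (y - qw) ^ 2 + 2 * y * qw = S - 2 * u * pw := by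
      rw [hS, hu, hpw, hqw]
      linear_combination hwc
    rw [hexp]
    linarith [hkey]
  rw [infDist_eq_of_min hw0mem hmin, sinh_eq_sqrt dist_nonneg hcosh0]
  have h1 : (T / (2 * r * y)) ^ 2 - 1 = ((u ^ 2 + y ^ 2 - r ^ 2) / (2 * r * y)) ^ 2 := by
    rw [div_pow, div_pow, hTsq]
    field_simp
    ring
  rw [h1, Real.sqrt_sq_eq_abs, abs_div,
    abs_of_pos (show (0:ℝ) < 2 * r * y from mul_pos (mul_pos two_pos hr) hy0)]

/-- Coefficients `A, B, C` such that `sgn·sinh(dist to line) = (A(x²+y²)+Bx+C)/y`. -/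
def cA : HLine → ℝ
  | .vertical _ => 0
  | .circle _ r _ => 1 / (2 * r)

def cB : HLine → ℝ
  | .vertical _ => 1
  | .circle c r _ => -c / r

def cC : HLine → ℝ
  | .vertical a => -a
  | .circle c r _ => (c ^ 2 - r ^ 2) / (2 * r)

/-- The signed sinh-distance function of a line. -/
def g (m : HLine) (z : ℍ) : ℝ :=
  (cA m * (z.re ^ 2 + z.im ^ 2) + cB m * z.re + cC m) / z.im

lemma g_continuous (m : HLine) : Continuous (g m) := by
  apply Continuous.div
  · exact ((continuous_const.mul
        ((UpperHalfPlane.continuous_re.pow 2).add (UpperHalfPlane.continuous_im.pow 2))).add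
        (continuous_const.mul UpperHalfPlane.continuous_re)).add continuous_const
  · exact UpperHalfPlane.continuous_im
  · exact fun z => z.im_pos.ne'

lemma key1 (m : HLine) (z : ℍ) :
    m.sgn z * Real.sinh (Metric.infDist z m.carrier) = g m z := by
  cases m with
  | vertical a =>
    rw [sinh_infDist_vertical]
    show Real.sign ((z : ℂ).re - a) * (|z.re - a| / z.im) = _
    rw [g, cA, cB, cC]
    have : (z : ℂ).re = z.re := rfl
    rw [this, ← mul_div_assoc, real_sign_mul_abs]
    ring_nf
  | circle c r hr =>
    rw [sinh_infDist_circle]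
    show Real.sign (‖(z : ℂ) - (c : ℂ)‖ - r) *
      (|(z.re - c) ^ 2 + z.im ^ 2 - r ^ 2| / (2 * r * z.im)) = _
    set t : ℝ := ‖(z : ℂ) - (c : ℂ)‖ with ht
    have ht0 : 0 ≤ t := by positivity
    have htsq : t ^ 2 = (z.re - c) ^ 2 + z.im ^ 2 := by
      rw [ht, Complex.sq_norm, Complex.normSq_apply]
      simp only [Complex.sub_re, Complex.sub_im, Complex.ofReal_re, Complex.ofReal_im]
      rw [UpperHalfPlane.coe_re, UpperHalfPlane.coe_im]
      ring
    have hfact : (z.re - c) ^ 2 + z.im ^ 2 - r ^ 2 = (t - r) * (t + r) := by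
      rw [← htsq]; ring
    have habs : |(z.re - c) ^ 2 + z.im ^ 2 - r ^ 2| = |t - r| * (t + r) := by
      rw [hfact, abs_mul, abs_of_pos (show (0:ℝ) < t + r by linarith)]
    rw [habs, g, cA, cB, cC]
    have hnum : Real.sign (t - r) * (|t - r| * (t + r) / (2 * r * z.im)) =
        ((t - r) * (t + r)) / (2 * r * z.im) := by
      rw [← mul_div_assoc, ← mul_assoc, real_sign_mul_abs]
    rw [hnum, ← hfact]
    have hy0 : z.im ≠ 0 := z.im_pos.ne'
    field_simp
    ring

lemma key2 {m : HLine} {P : ℍ} (hP : P ∈ m.carrier) :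
    cA m * (P.re ^ 2 + P.im ^ 2) + cB m * P.re + cC m = 0 := by
  cases m with
  | vertical a =>
    have : P.re = a := hP
    rw [cA, cB, cC, this]; ring
  | circle c r hr =>
    have h := mem_circle_coords hP
    rw [cA, cB, cC]
    field_simp
    nlinarith [h]

lemma hline_det_ne_zero {m₁ m₂ : HLine} {P : ℍ} (hne : m₁ ≠ m₂)
    (hP₁ : P ∈ m₁.carrier) (hP₂ : P ∈ m₂.carrier) :
    cA m₁ * cB m₂ - cA m₂ * cB m₁ ≠ 0 := by
  cases m₁ with
  | vertical a₁ =>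
    cases m₂ with
    | vertical a₂ =>
      exfalso
      apply hne
      have h1 : P.re = a₁ := hP₁
      have h2 : P.re = a₂ := hP₂
      rw [show a₁ = a₂ by rw [← h1, h2]]
    | circle c r hr =>
      show (0 : ℝ) * (-c / r) - 1 / (2 * r) * 1 ≠ 0
      have : (0 : ℝ) * (-c / r) - 1 / (2 * r) * 1 = -(1 / (2 * r)) := by ring
      rw [this]
      simp only [ne_eq, neg_eq_zero, div_eq_zero_iff]
      push_neg
      constructor <;> intro h <;> [exact one_ne_zero h; linarith]
  | circle c₁ r₁ hr₁ =>
    cases m₂ with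
    | vertical a₂ =>
      show 1 / (2 * r₁) * 1 - (0 : ℝ) * (-c₁ / r₁) ≠ 0
      have : 1 / (2 * r₁) * 1 - (0 : ℝ) * (-c₁ / r₁) = 1 / (2 * r₁) := by ring
      rw [this]
      positivity
    | circle c₂ r₂ hr₂ =>
      show 1 / (2 * r₁) * (-c₂ / r₂) - 1 / (2 * r₂) * (-c₁ / r₁) ≠ 0
      have hd : 1 / (2 * r₁) * (-c₂ / r₂) - 1 / (2 * r₂) * (-c₁ / r₁) =
          (c₁ - c₂) / (2 * r₁ * r₂) := by field_simp; ring
      rw [hd]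
      intro h
      have hc : c₁ = c₂ := by
        have h2 : c₁ - c₂ = 0 := by
          by_contra hcc
          exact hcc (by field_simp at h; linarith)
        linarith
      have h1 := mem_circle_coords hP₁
      have h2 := mem_circle_coords hP₂
      rw [hc] at h1
      have hrr : r₁ = r₂ := by nlinarith [h1, h2, hr₁, hr₂]
      exact hne (by subst hc; subst hrr; rfl)

/-- Finiteness of hyperbolic area of compact sets. -/
instance : IsFiniteMeasureOnCompacts hypArea := by
  constructor
  intro K hK
  have hemb : MeasurableEmbedding (fun z : ℍ => (z : ℂ)) :=
    UpperHalfPlane.isOpenEmbedding_coe.measurableEmbedding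
  rw [hypArea, hemb.comap_apply]
  set s : Set ℂ := (fun z : ℍ => (z : ℂ)) '' K with hs
  have hsc : IsCompact s := hK.image UpperHalfPlane.continuous_coe
  rcases s.eq_empty_or_nonempty with hse | hse
  · rw [hse]; simp
  obtain ⟨w, hws, hwmin⟩ := hsc.exists_isMinOn hse Complex.continuous_im.continuousOn
  have hw0 : 0 < w.im := by
    obtain ⟨z, _, rfl⟩ := hws
    exact z.im_pos
  rw [withDensity_apply _ hsc.measurableSet]
  calc ∫⁻ x in s, ENNReal.ofReal ((x.im ^ 2)⁻¹) ∂volume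
      ≤ ∫⁻ _ in s, ENNReal.ofReal ((w.im ^ 2)⁻¹) ∂volume := by
        apply setLIntegral_mono measurable_const
        intro x hx
        apply ENNReal.ofReal_le_ofReal
        have hle : w.im ≤ x.im := hwmin hx
        have hx0 : 0 < x.im := lt_of_lt_of_le hw0 hle
        apply inv_anti₀ (pow_pos hw0 2)
        nlinarith [hle, hw0]
    _ = ENNReal.ofReal ((w.im ^ 2)⁻¹) * volume s := setLIntegral_const s _
    _ < ⊤ := ENNReal.mul_lt_top ENNReal.ofReal_lt_top hsc.measure_lt_top

lemma integrableOn_g_mul (m : HLine) (K : Set ℍ) (hK : IsCompact K)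
    (lam : ℍ → ℝ) (hcont : Continuous lam) :
    IntegrableOn (fun z => g m z * lam z) K hypArea :=
  ((g_continuous m).mul hcont).continuousOn.integrableOn_compact hK

end LaminaAux

open LaminaAux in
/-- Theorem 4.2: let `(K, lam)` be a lamina (compact region with continuous
nonnegative density of positive total mass), and let `m₁, m₂, m₃` be three lines
through a common point `P`, the first two distinct.  If the moments of the lamina
with respect to `m₁` and `m₂` vanish, so does its moment with respect to `m₃`. -/
theorem lamina_moments_concurrent (K : Set ℍ) (hK : IsCompact K)
    (lam : ℍ → ℝ) (hcont : Continuous lam) (hnn : ∀ z, 0 ≤ lam z)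
    (hpos : 0 < ∫ z in K, lam z ∂hypArea)
    (P : ℍ) (m₁ m₂ m₃ : HLine) (hne : m₁ ≠ m₂)
    (hP₁ : P ∈ m₁.carrier) (hP₂ : P ∈ m₂.carrier) (hP₃ : P ∈ m₃.carrier)
    (hM₁ : ∫ z in K, m₁.sgn z * lam z * Real.sinh (Metric.infDist z m₁.carrier) ∂hypArea = 0)
    (hM₂ : ∫ z in K, m₂.sgn z * lam z * Real.sinh (Metric.infDist z m₂.carrier) ∂hypArea = 0) :
    ∫ z in K, m₃.sgn z * lam z * Real.sinh (Metric.infDist z m₃.carrier) ∂hypArea = 0 := by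
  have hdet := hline_det_ne_zero hne hP₁ hP₂
  set det : ℝ := cA m₁ * cB m₂ - cA m₂ * cB m₁ with hdetdef
  set s : ℝ := (cA m₃ * cB m₂ - cB m₃ * cA m₂) / det with hsdef
  set t : ℝ := (cA m₁ * cB m₃ - cB m₁ * cA m₃) / det with htdef
  have hA : cA m₃ = s * cA m₁ + t * cA m₂ := by
    rw [hsdef, htdef]; field_simp; ring
  have hB : cB m₃ = s * cB m₁ + t * cB m₂ := by
    rw [hsdef, htdef]; field_simp; ring
  have e₁ := key2 hP₁
  have e₂ := key2 hP₂
  have e₃ := key2 hP₃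
  have hC : cC m₃ = s * cC m₁ + t * cC m₂ := by
    have := e₃
    rw [hA, hB] at this
    linear_combination this - s * e₁ - t * e₂
  have hg : ∀ z : ℍ, g m₃ z = s * g m₁ z + t * g m₂ z := by
    intro z
    rw [g, g, g, hA, hB, hC]
    have hy : z.im ≠ 0 := z.im_pos.ne'
    field_simp
    ring
  have hi₁ := integrableOn_g_mul m₁ K hK lam hcont
  have hi₂ := integrableOn_g_mul m₂ K hK lam hcont
  have hM₁' : ∫ z in K, g m₁ z * lam z ∂hypArea = 0 := by
    rw [← hM₁]
    apply integral_congr_ae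
    filter_upwards with z
    rw [show m₁.sgn z * lam z * Real.sinh (Metric.infDist z m₁.carrier) =
      (m₁.sgn z * Real.sinh (Metric.infDist z m₁.carrier)) * lam z by ring, key1]
  have hM₂' : ∫ z in K, g m₂ z * lam z ∂hypArea = 0 := by
    rw [← hM₂]
    apply integral_congr_ae
    filter_upwards with z
    rw [show m₂.sgn z * lam z * Real.sinh (Metric.infDist z m₂.carrier) =
      (m₂.sgn z * Real.sinh (Metric.infDist z m₂.carrier)) * lam z by ring, key1]
  calc ∫ z in K, m₃.sgn z * lam z * Real.sinh (Metric.infDist z m₃.carrier) ∂hypArea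
      = ∫ z in K, (s * (g m₁ z * lam z) + t * (g m₂ z * lam z)) ∂hypArea := by
        apply integral_congr_ae
        filter_upwards with z
        rw [show m₃.sgn z * lam z * Real.sinh (Metric.infDist z m₃.carrier) =
          (m₃.sgn z * Real.sinh (Metric.infDist z m₃.carrier)) * lam z by ring, key1, hg z]
        ring
    _ = s * ∫ z in K, g m₁ z * lam z ∂hypArea + t * ∫ z in K, g m₂ z * lam z ∂hypArea := by
        rw [integral_add (hi₁.const_mul s) (hi₂.const_mul t), integral_const_mul,
          integral_const_mul]
    _ = 0 := by rw [hM₁', hM₂']; ring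
end
end

section
/- Let P_n(r) be the regular hyperbolic n-gon with in-radius r and side length a, with uniform density 1. Its mass equals (n·a·sinh r)/2, i.e., half the product of its perimeter with sinh(r). Equivalently, in the Gauss polar model with C = coth r, 2n·∫_0^{π/n} ∫_0^{arccoth(C cos θ)} cosh ρ sinh ρ dρ dθ = n·sinh(r)·artanh(tan(π/n)·sinh r) = (n a sinh r)/2. -/
set_option maxHeartbeats 1000000

open Real

lemma aux_inner (R : ℝ) : ∫ ρ in (0:ℝ)..R, Real.cosh ρ * Real.sinh ρ
    = Real.sinh R ^ 2 / 2 := by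
  have h : ∀ x ∈ Set.uIcc (0:ℝ) R,
      HasDerivAt (fun y => Real.sinh y ^ 2 / 2) (Real.cosh x * Real.sinh x) x := by
    intro x _
    have h1 : HasDerivAt (fun y => Real.sinh y ^ 2 / 2)
        (2 * Real.sinh x ^ 1 * Real.cosh x / 2) x :=
      ((Real.hasDerivAt_sinh x).pow 2).div_const 2
    convert h1 using 1; ring
  have hi : IntervalIntegrable (fun x => Real.cosh x * Real.sinh x)
      MeasureTheory.volume 0 R :=
    (Real.continuous_cosh.mul Real.continuous_sinh).intervalIntegrable 0 R
  rw [intervalIntegral.integral_eq_sub_of_hasDerivAt h hi]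
  simp

lemma aux_log_tanh (x : ℝ) : Real.log ((1 + Real.tanh x) / (1 - Real.tanh x)) = 2 * x := by
  have hc : (0:ℝ) < Real.cosh x := Real.cosh_pos x
  have key : (1 + Real.tanh x) / (1 - Real.tanh x) = Real.exp (2 * x) := by
    rw [Real.tanh_eq_sinh_div_cosh, Real.sinh_eq, Real.cosh_eq]
    have he : Real.exp x ≠ 0 := Real.exp_ne_zero x
    have he' : Real.exp (-x) ≠ 0 := Real.exp_ne_zero _
    have h2 : Real.exp (2 * x) = Real.exp x * Real.exp x := by
      rw [← Real.exp_add]; ring_nf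
    have h3 : Real.exp (-x) * Real.exp x = 1 := by
      rw [← Real.exp_add]; simp
    field_simp
    have h2' : Real.exp (x * 2) = Real.exp x * Real.exp x := by rw [mul_comm]; exact h2
    linear_combination (-2 * Real.exp x) * h3 + (-2 * Real.exp (-x)) * h2'
  rw [key, Real.log_exp]

/-- Proposition 6.6: the mass of the uniform regular hyperbolic `n`-gon of in-radius
`r` and side length `a` is half the product of its perimeter with `sinh r`.  In the
Gauss polar model, with `C = coth r`, one side is `ρ = arccoth(C cos θ)`,
`−π/n ≤ θ ≤ π/n` (here `arccoth t = arsinh (1/√(t² − 1))` for `t > 1`), and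
`tanh(a/2) = tan(π/n)·sinh r`.  Since Mathlib lacks `artanh`, we write
`artanh t = log((1 + t)/(1 − t))/2`. -/
theorem mass_of_regular_polygon (n : ℕ) (hn : 3 ≤ n) (r a : ℝ) (hr : 0 < r)
    (ha : 0 < a) (hside : Real.tanh (a / 2) = Real.tan (π / n) * Real.sinh r) :
    (2 * n) * ∫ θ in (0:ℝ)..(π / n),
        ∫ ρ in (0:ℝ)..(Real.arsinh (Real.sqrt
            ((Real.cosh r / Real.sinh r * Real.cos θ) ^ 2 - 1))⁻¹),
          Real.cosh ρ * Real.sinh ρ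
      = n * Real.sinh r *
          (Real.log ((1 + Real.tan (π / n) * Real.sinh r)
            / (1 - Real.tan (π / n) * Real.sinh r)) / 2) ∧
    (2 * n) * ∫ θ in (0:ℝ)..(π / n),
        ∫ ρ in (0:ℝ)..(Real.arsinh (Real.sqrt
            ((Real.cosh r / Real.sinh r * Real.cos θ) ^ 2 - 1))⁻¹),
          Real.cosh ρ * Real.sinh ρ
      = n * a * Real.sinh r / 2 := by
  have hs : 0 < Real.sinh r := Real.sinh_pos_iff.mpr hr
  set s := Real.sinh r with hs_def
  set T := Real.tan (π / n) with hT_def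
  have hth1 : Real.tanh (a / 2) < 1 := by
    rw [Real.tanh_eq_sinh_div_cosh, div_lt_one (Real.cosh_pos _)]
    exact Real.sinh_lt_cosh _
  have hth0 : 0 < Real.tanh (a / 2) := by
    rw [Real.tanh_eq_sinh_div_cosh]
    exact div_pos (Real.sinh_pos_iff.mpr (by linarith)) (Real.cosh_pos _)
  have hTs1 : T * s < 1 := by rw [← hside]; exact hth1
  have hTs0 : 0 < T * s := by rw [← hside]; exact hth0
  have hT : 0 < T := by nlinarith
  have hnR : (0:ℝ) < n := by exact_mod_cast Nat.lt_of_lt_of_le (by norm_num) hn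
  have hπn0 : 0 < π / n := div_pos Real.pi_pos hnR
  have hπn2 : π / n < π / 2 := by
    apply div_lt_div_of_pos_left Real.pi_pos (by norm_num)
    exact_mod_cast Nat.lt_of_lt_of_le (by norm_num) hn
  have hπnπ : π / n ≤ π := by nlinarith [Real.pi_pos]
  have hcosn : 0 < Real.cos (π / n) :=
    Real.cos_pos_of_mem_Ioo ⟨by linarith, hπn2⟩
  have hsinn : Real.sin (π / n) = T * Real.cos (π / n) := by
    rw [hT_def, Real.tan_eq_sin_div_cos]; field_simp
  -- pointwise facts on the interval
  have hfacts : ∀ θ ∈ Set.Icc (0:ℝ) (π / n),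
      0 < Real.cos θ + s * Real.sin θ ∧ 0 < Real.cos θ - s * Real.sin θ := by
    intro θ ⟨h0, h1⟩
    have hcos : 0 < Real.cos θ :=
      Real.cos_pos_of_mem_Ioo ⟨by linarith, lt_of_le_of_lt h1 hπn2⟩
    have hsin0 : 0 ≤ Real.sin θ := Real.sin_nonneg_of_nonneg_of_le_pi h0 (by linarith)
    have hsinle : Real.sin θ ≤ Real.sin (π / n) :=
      Real.strictMonoOn_sin.monotoneOn ⟨by linarith, by linarith⟩
        ⟨by linarith, by linarith⟩ h1
    have hcosge : Real.cos (π / n) ≤ Real.cos θ :=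
      Real.strictAntiOn_cos.antitoneOn ⟨h0, by linarith⟩ ⟨by linarith, hπnπ⟩ h1
    constructor
    · positivity
    · nlinarith [hsinn]
  have key : (∫ θ in (0:ℝ)..(π / n),
        ∫ ρ in (0:ℝ)..(Real.arsinh (Real.sqrt
            ((Real.cosh r / s * Real.cos θ) ^ 2 - 1))⁻¹),
          Real.cosh ρ * Real.sinh ρ)
      = s / 4 * Real.log ((1 + T * s) / (1 - T * s)) := by
    have hEq : Set.EqOn
        (fun θ => ∫ ρ in (0:ℝ)..(Real.arsinh (Real.sqrt
            ((Real.cosh r / s * Real.cos θ) ^ 2 - 1))⁻¹),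
          Real.cosh ρ * Real.sinh ρ)
        (fun θ => s ^ 2 / (Real.cos θ ^ 2 - s ^ 2 * Real.sin θ ^ 2) / 2)
        (Set.uIcc 0 (π / n)) := by
      intro θ hθ
      rw [Set.uIcc_of_le hπn0.le] at hθ
      obtain ⟨hg, hh⟩ := hfacts θ hθ
      simp only
      rw [aux_inner, Real.sinh_arsinh, inv_pow]
      have hval : (Real.cosh r / s * Real.cos θ) ^ 2 - 1
          = (Real.cos θ ^ 2 - s ^ 2 * Real.sin θ ^ 2) / s ^ 2 := by
        field_simp
        nlinarith [Real.cosh_sq r, Real.sin_sq_add_cos_sq θ]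
      have hpos : 0 < Real.cos θ ^ 2 - s ^ 2 * Real.sin θ ^ 2 := by nlinarith
      rw [hval, Real.sq_sqrt (by positivity), inv_div]
    rw [intervalIntegral.integral_congr hEq]
    have hne : ∀ θ ∈ Set.uIcc (0:ℝ) (π / n),
        Real.cos θ ^ 2 - s ^ 2 * Real.sin θ ^ 2 ≠ 0 := by
      intro θ hθ
      rw [Set.uIcc_of_le hπn0.le] at hθ
      obtain ⟨hg, hh⟩ := hfacts θ hθ
      nlinarith
    have hderiv : ∀ θ ∈ Set.uIcc (0:ℝ) (π / n),
        HasDerivAt (fun θ => s / 4 * (Real.log (Real.cos θ + s * Real.sin θ)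
          - Real.log (Real.cos θ - s * Real.sin θ)))
          (s ^ 2 / (Real.cos θ ^ 2 - s ^ 2 * Real.sin θ ^ 2) / 2) θ := by
      intro θ hθ
      rw [Set.uIcc_of_le hπn0.le] at hθ
      obtain ⟨hg, hh⟩ := hfacts θ hθ
      have hg' : HasDerivAt (fun θ => Real.cos θ + s * Real.sin θ)
          (-Real.sin θ + s * Real.cos θ) θ :=
        (Real.hasDerivAt_cos θ).add ((Real.hasDerivAt_sin θ).const_mul s)
      have hh' : HasDerivAt (fun θ => Real.cos θ - s * Real.sin θ)
          (-Real.sin θ - s * Real.cos θ) θ :=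
        (Real.hasDerivAt_cos θ).sub ((Real.hasDerivAt_sin θ).const_mul s)
      have hD := ((hg'.log hg.ne').sub (hh'.log hh.ne')).const_mul (s / 4)
      convert hD using 1
      · rfl
      · rfl
      · rfl
      have h1 : Real.cos θ + s * Real.sin θ ≠ 0 := hg.ne'
      have h2 : Real.cos θ - s * Real.sin θ ≠ 0 := hh.ne'
      have h3 : Real.cos θ ^ 2 - s ^ 2 * Real.sin θ ^ 2 ≠ 0 := by nlinarith
      field_simp [h1, h2, h3]
      linear_combination (4 * s ^ 3 * Real.sin θ ^ 2 - 4 * s * Real.cos θ ^ 2) *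
        Real.sin_sq_add_cos_sq θ
    have hint : IntervalIntegrable
        (fun θ => s ^ 2 / (Real.cos θ ^ 2 - s ^ 2 * Real.sin θ ^ 2) / 2)
        MeasureTheory.volume 0 (π / n) := by
      apply ContinuousOn.intervalIntegrable
      apply ContinuousOn.div_const
      exact continuousOn_const.div
        (((Real.continuous_cos.pow 2).sub
          (continuous_const.mul (Real.continuous_sin.pow 2))).continuousOn) hne
    rw [intervalIntegral.integral_eq_sub_of_hasDerivAt hderiv hint]
    obtain ⟨hgn, hhn⟩ := hfacts (π / n) ⟨hπn0.le, le_refl _⟩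
    have hq : (Real.cos (π / n) + s * Real.sin (π / n))
        / (Real.cos (π / n) - s * Real.sin (π / n)) = (1 + T * s) / (1 - T * s) := by
      rw [hsinn]
      have h2 : (1:ℝ) - T * s ≠ 0 := by linarith
      have h3 : Real.cos (π / n) - s * (T * Real.cos (π / n)) ≠ 0 := by nlinarith
      field_simp [hcosn.ne', h2, h3]
    rw [← Real.log_div hgn.ne' hhn.ne', hq]
    simp
  constructor
  · rw [key]; ring
  · rw [key]
    have hL : Real.log ((1 + T * s) / (1 - T * s)) = a := by
      rw [← hside, aux_log_tanh]; ring
    rw [hL]; ring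
end
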